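/- arXiv:2112.10248 — 7 statements merged into one kernel-verified Lean document; each statement's English description precedes it below -/
import Mathlib

section
/- Let X_1, …, X_K be independent Pareto(γ) random variables on a common probability space, with γ > 0, and let a_1, …, a_K ≥ 0 be constants, not all zero. Then lim_{r→∞} r^γ · P(Σ_{k=1}^K a_k X_k > r) = Σ_{k=1}^K a_k^γ. -/
open MeasureTheory ProbabilityTheory Filter

/-- Weierstrass-type product bound: `∏ (1 - pᵢ) ≤ 1 - ∑ pᵢ + (∑ pᵢ)²` for `pᵢ ∈ [0,1]`. -/
lemma pareto_aux_prod {ι : Type*} (s : Finset ι) (p : ι → ℝ) (h0 : ∀ i, 0 ≤ p i)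
    (h1 : ∀ i, p i ≤ 1) :
    ∏ i ∈ s, (1 - p i) ≤ 1 - (∑ i ∈ s, p i) + (∑ i ∈ s, p i) ^ 2 := by
  induction s using Finset.cons_induction with
  | empty => simp
  | cons a s ha ih =>
    rw [Finset.prod_cons, Finset.sum_cons]
    have hP0 : 0 ≤ ∏ i ∈ s, (1 - p i) :=
      Finset.prod_nonneg (fun i _ => by linarith [h1 i])
    have hT0 : 0 ≤ ∑ i ∈ s, p i := Finset.sum_nonneg fun i _ => h0 i
    have h2 : (1 - p a) * (∏ i ∈ s, (1 - p i)) ≤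
        (1 - p a) * (1 - (∑ i ∈ s, p i) + (∑ i ∈ s, p i) ^ 2) :=
      mul_le_mul_of_nonneg_left ih (by linarith [h1 a])
    nlinarith [mul_nonneg (h0 a) hT0, sq_nonneg (∑ i ∈ s, p i),
      mul_nonneg (h0 a) (sq_nonneg (∑ i ∈ s, p i)), sq_nonneg (p a)]

/-- "One big jump" splitting: if a sum of nonnegative reals exceeds `r`, then either a single
term exceeds `(1-δ)r`, or two distinct terms each exceed `δr/K`. -/
lemma pareto_split {K : ℕ} (t : Fin K → ℝ) (ht : ∀ k, 0 ≤ t k) {r δ : ℝ}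
    (hr : 0 < r) (hδ0 : 0 < δ) (hδ1 : δ < 1) (hsum : r < ∑ k, t k) :
    (∃ k, (1 - δ) * r < t k) ∨
      (∃ i j, i ≠ j ∧ δ * r / K < t i ∧ δ * r / K < t j) := by
  set c := δ * r / K with hc
  by_cases hex : ∃ i, c < t i
  · obtain ⟨i, hi⟩ := hex
    by_cases hex2 : ∃ j, j ≠ i ∧ c < t j
    · obtain ⟨j, hji, hj⟩ := hex2
      exact Or.inr ⟨j, i, hji, hj, hi⟩
    · push_neg at hex2
      left
      refine ⟨i, ?_⟩
      have hK : 0 < K := i.pos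
      have hc0 : 0 ≤ c := by rw [hc]; positivity
      have hKc : (K : ℝ) * c = δ * r := by rw [hc]; field_simp
      have hsplit : t i + ∑ k ∈ Finset.univ.erase i, t k = ∑ k, t k :=
        Finset.add_sum_erase _ t (Finset.mem_univ i)
      have herase : ∑ k ∈ Finset.univ.erase i, t k ≤ (K : ℝ) * c := by
        calc ∑ k ∈ Finset.univ.erase i, t k
            ≤ ∑ _k ∈ Finset.univ.erase i, c :=
              Finset.sum_le_sum fun k hk => hex2 k (Finset.ne_of_mem_erase hk)
          _ = (Finset.univ.erase i).card * c := by rw [Finset.sum_const, nsmul_eq_mul]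
          _ ≤ (K : ℝ) * c := by
              apply mul_le_mul_of_nonneg_right _ hc0
              have : (Finset.univ.erase i).card ≤ K := by
                simpa using Finset.card_le_card (Finset.erase_subset _ _)
              exact_mod_cast this
      nlinarith
  · push_neg at hex
    exfalso
    have h1 : ∑ k, t k ≤ (K : ℝ) * c := by
      calc ∑ k, t k ≤ ∑ _k : Fin K, c := Finset.sum_le_sum fun k _ => hex k
        _ = (K : ℝ) * c := by simp [Finset.sum_const, nsmul_eq_mul]
    have h2 : (K : ℝ) * c ≤ δ * r := by
      rcases Nat.eq_zero_or_pos K with h | h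
      · subst h; simp [hc]; positivity
      · have : (K : ℝ) ≠ 0 := by exact_mod_cast h.ne'
        rw [hc]; field_simp; exact le_rfl
    nlinarith

lemma pareto_toReal_iUnion_le {Ω ι : Type*} [Fintype ι] [MeasurableSpace Ω]
    (μ : Measure Ω) [IsFiniteMeasure μ] (A : ι → Set Ω) :
    (μ (⋃ i, A i)).toReal ≤ ∑ i, (μ (A i)).toReal := by
  rw [← ENNReal.toReal_sum (fun i _ => measure_ne_top μ _)]
  exact ENNReal.toReal_mono (ENNReal.sum_ne_top.mpr fun i _ => measure_ne_top μ _)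
    ((measure_iUnion_le A).trans_eq (tsum_fintype _))

lemma pareto_toReal_union_le {Ω : Type*} [MeasurableSpace Ω]
    (μ : Measure Ω) [IsFiniteMeasure μ] (s t : Set Ω) :
    (μ (s ∪ t)).toReal ≤ (μ s).toReal + (μ t).toReal := by
  rw [← ENNReal.toReal_add (measure_ne_top μ s) (measure_ne_top μ t)]
  exact ENNReal.toReal_mono
    (ENNReal.add_ne_top.mpr ⟨measure_ne_top μ s, measure_ne_top μ t⟩)
    (measure_union_le s t)

set_option maxHeartbeats 2000000 in
/-- If `X 1, …, X K` are independent Pareto(γ) random variables (γ > 0)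
and `a 1, …, a K ≥ 0` are constants, not all zero, then
`r^γ · P(∑ k, a k * X k > r) → ∑ k, (a k)^γ` as `r → ∞`. -/
theorem weighted_sum_pareto_tail
    {Ω : Type*} [MeasurableSpace Ω] (P : Measure Ω) [IsProbabilityMeasure P]
    (K : ℕ) (γ : ℝ) (hγ : 0 < γ) (X : Fin K → Ω → ℝ)
    (hmeas : ∀ k, Measurable (X k))
    (hindep : iIndepFun X P)
    (htail : ∀ k, ∀ x : ℝ, 1 ≤ x → (P {ω | x < X k ω}).toReal = x ^ (-γ))
    (hlow : ∀ k, ∀ x : ℝ, x < 1 → (P {ω | x < X k ω}).toReal = 1)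
    (a : Fin K → ℝ) (ha : ∀ k, 0 ≤ a k) (hne : ∃ k, a k ≠ 0) :
    Tendsto (fun r : ℝ => r ^ γ * (P {ω | r < ∑ k, a k * X k ω}).toReal)
      atTop (nhds (∑ k, (a k) ^ γ)) := by
  classical
  obtain ⟨k₀, hk₀⟩ := hne
  set S := ∑ k, (a k) ^ γ with hSdef
  have hS : 0 < S :=
    Finset.sum_pos' (fun k _ => Real.rpow_nonneg (ha k) _)
      ⟨k₀, Finset.mem_univ _, Real.rpow_pos_of_pos ((ha k₀).lt_of_ne (Ne.symm hk₀)) _⟩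
  have hKpos : (0 : ℝ) < K := by exact_mod_cast k₀.pos
  have hple1 : ∀ s : Set Ω, (P s).toReal ≤ 1 := by
    intro s
    have := ENNReal.toReal_mono ENNReal.one_ne_top (prob_le_one (μ := P) (s := s))
    simpa using this
  -- measurability
  have hBmeas : ∀ (k : Fin K) (s : ℝ), MeasurableSet {x : ℝ | s < a k * x} := by
    intro k s
    exact measurableSet_lt measurable_const (measurable_id.const_mul _)
  have hAmeas : ∀ (s : ℝ) (k : Fin K), MeasurableSet {ω | s < a k * X k ω} :=
    fun s k => measurableSet_lt measurable_const ((hmeas k).const_mul _)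
  -- the a.s. event E = {∀ k, 0 < X k}
  set E : Set Ω := ⋂ k, {ω | 0 < X k ω} with hEdef
  have hEc : P Eᶜ = 0 := by
    have h1 : ∀ k, P {ω | (0:ℝ) < X k ω} = 1 := by
      intro k
      have h := hlow k 0 one_pos
      have hne' : P {ω | (0:ℝ) < X k ω} ≠ ⊤ := measure_ne_top _ _
      rw [← ENNReal.toReal_one] at h
      exact (ENNReal.toReal_eq_toReal_iff' hne' ENNReal.one_ne_top).mp h
    have h2 : ∀ k, P {ω | (0:ℝ) < X k ω}ᶜ = 0 := by
      intro k
      rw [prob_compl_eq_one_sub (measurableSet_lt measurable_const (hmeas k)), h1 k, tsub_self]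
    rw [hEdef, Set.compl_iInter]
    refine le_antisymm ?_ (zero_le)
    calc P (⋃ k, {ω | 0 < X k ω}ᶜ) ≤ ∑' k, P {ω | 0 < X k ω}ᶜ := measure_iUnion_le _
      _ = 0 := by simp [h2]
  -- exact single tail probability
  have hsingle : ∀ (k : Fin K) (s : ℝ), 1 ≤ s → a k ≤ s →
      (P {ω | s < a k * X k ω}).toReal = a k ^ γ * s ^ (-γ) := by
    intro k s hs1 hsak
    rcases eq_or_lt_of_le (ha k) with h0 | h0
    · have hset : {ω | s < a k * X k ω} = ∅ := by
        ext ω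
        simp only [Set.mem_setOf_eq, Set.mem_empty_iff_false, iff_false, not_lt, ← h0]
        nlinarith
      rw [hset, ← h0]
      simp [Real.zero_rpow hγ.ne']
    · have heq : {ω | s < a k * X k ω} = {ω | s / a k < X k ω} := by
        ext ω
        simp [div_lt_iff₀' h0]
      rw [heq, htail k _ ((one_le_div h0).mpr hsak)]
      rw [Real.div_rpow (by linarith) (ha k), Real.rpow_neg (ha k), div_eq_mul_inv, inv_inv, mul_comm]
  -- pairwise independence of the tail events
  have hpair : ∀ (s : ℝ) (i j : Fin K), i ≠ j →
      (P ({ω | s < a i * X i ω} ∩ {ω | s < a j * X j ω})).toReal =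
        (P {ω | s < a i * X i ω}).toReal * (P {ω | s < a j * X j ω}).toReal := by
    intro s i j hij
    have h := hindep.measure_inter_preimage_eq_mul {i, j}
      (sets := fun k => {x : ℝ | s < a k * x}) (fun k _ => hBmeas k s)
    have hiinter : (⋂ k ∈ ({i, j} : Finset (Fin K)), X k ⁻¹' {x : ℝ | s < a k * x}) =
        {ω | s < a i * X i ω} ∩ {ω | s < a j * X j ω} := by
      rw [Finset.set_biInter_insert, Finset.set_biInter_singleton]
      rfl
    rw [hiinter, Finset.prod_pair hij] at h
    rw [h, ENNReal.toReal_mul]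
    rfl
  -- measure of the union via full independence
  have hIprod : ∀ r : ℝ, (P (⋃ k, {ω | r < a k * X k ω})).toReal =
      1 - ∏ k, (1 - (P {ω | r < a k * X k ω}).toReal) := by
    intro r
    have h := hindep.measure_inter_preimage_eq_mul Finset.univ
      (sets := fun k => {x : ℝ | r < a k * x}ᶜ) (fun k _ => (hBmeas k r).compl)
    have heq : (⋂ k ∈ Finset.univ, X k ⁻¹' {x : ℝ | r < a k * x}ᶜ) =
        (⋃ k, {ω | r < a k * X k ω})ᶜ := by
      rw [Set.compl_iUnion]
      simp only [Finset.mem_univ, Set.iInter_true, Set.preimage_compl]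
      rfl
    rw [heq, prob_compl_eq_one_sub (MeasurableSet.iUnion fun k => hAmeas r k)] at h
    have hU1 : P (⋃ k, {ω | r < a k * X k ω}) ≤ 1 := prob_le_one
    have hU : P (⋃ k, {ω | r < a k * X k ω}) =
        1 - ∏ k ∈ Finset.univ, P (X k ⁻¹' {x : ℝ | r < a k * x}ᶜ) := by
      rw [← h, ENNReal.sub_sub_cancel ENNReal.one_ne_top hU1]
    rw [hU, ENNReal.toReal_sub_of_le ?hle ENNReal.one_ne_top, ENNReal.toReal_one,
      ENNReal.toReal_prod]
    · congr 1
      apply Finset.prod_congr rfl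
      intro k _
      have hpre : X k ⁻¹' {x : ℝ | r < a k * x}ᶜ = {ω | r < a k * X k ω}ᶜ := rfl
      rw [hpre, prob_compl_eq_one_sub (hAmeas r k),
        ENNReal.toReal_sub_of_le prob_le_one ENNReal.one_ne_top, ENNReal.toReal_one]
    case hle =>
      calc ∏ k ∈ Finset.univ, P (X k ⁻¹' {x : ℝ | r < a k * x}ᶜ)
          ≤ ∏ k ∈ Finset.univ, 1 := Finset.prod_le_prod' fun k _ => prob_le_one
        _ = 1 := Finset.prod_const_one
  -- auxiliary constant dominating all the weights
  set Am : ℝ := ∑ k, a k with hAm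
  have ham : ∀ k, a k ≤ max 1 Am := fun k =>
    le_trans (Finset.single_le_sum (fun j _ => ha j) (Finset.mem_univ k)) (le_max_right _ _)
  -- main ε-argument
  rw [Metric.tendsto_atTop]
  intro ε hε
  -- choice of δ
  set q : ℝ := (S / (S + ε / 2)) ^ (γ⁻¹) with hqdef
  have hbase0 : 0 < S / (S + ε / 2) := div_pos hS (by linarith)
  have hbase1 : S / (S + ε / 2) < 1 := (div_lt_one (by linarith)).mpr (by linarith)
  have hq0 : 0 < q := Real.rpow_pos_of_pos hbase0 _
  have hq1 : q < 1 := Real.rpow_lt_one hbase0.le hbase1 (inv_pos.mpr hγ)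
  set δ : ℝ := 1 - q with hδdef
  have hδ0 : 0 < δ := by simp only [hδdef]; linarith
  have hδ1 : δ < 1 := by simp only [hδdef]; linarith
  have h1δ : 1 - δ = q := by simp [hδdef]
  have hqS : q ^ (-γ) * S = S + ε / 2 := by
    rw [hqdef, ← Real.rpow_mul hbase0.le]
    have hexp : γ⁻¹ * -γ = -1 := by field_simp
    rw [hexp, Real.rpow_neg_one, inv_div, div_mul_cancel₀ _ hS.ne']
  -- eventual conditions on r
  have ev3 : ∀ᶠ r : ℝ in atTop, max 1 Am ≤ (1 - δ) * r := by
    filter_upwards [eventually_ge_atTop (max 1 Am / q)] with r hr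
    rw [h1δ]
    calc max 1 Am = max 1 Am / q * q := by field_simp
      _ ≤ r * q := mul_le_mul_of_nonneg_right hr hq0.le
      _ = q * r := mul_comm _ _
  have ev4 : ∀ᶠ r : ℝ in atTop, max 1 Am ≤ δ * r / K := by
    filter_upwards [eventually_ge_atTop ((K : ℝ) * max 1 Am / δ)] with r hr
    have h1 : (K : ℝ) * max 1 Am ≤ δ * r := by
      calc (K : ℝ) * max 1 Am = δ * ((K : ℝ) * max 1 Am / δ) := by field_simp
        _ ≤ δ * r := mul_le_mul_of_nonneg_left hr hδ0.le
    rw [le_div_iff₀ hKpos]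
    linarith
  set Cp : ℝ := S ^ 2 * ((δ / K) ^ (-γ)) ^ 2 with hCp
  set Cm : ℝ := S ^ 2 + Cp with hCm
  have hCp0 : 0 ≤ Cp := by positivity
  have ev5 : ∀ᶠ r : ℝ in atTop, Cm * r ^ (-γ) < ε / 2 := by
    have h := (tendsto_rpow_neg_atTop hγ).const_mul Cm
    rw [mul_zero] at h
    exact h.eventually_lt_const (by linarith)
  have key : ∀ᶠ r : ℝ in atTop,
      dist (r ^ γ * (P {ω | r < ∑ k, a k * X k ω}).toReal) S < ε := by
    filter_upwards [ev3, ev4, ev5] with r h3 h4 h5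
    have h1M : (1 : ℝ) ≤ max 1 Am := le_max_left _ _
    have hqr1 : 1 ≤ (1 - δ) * r := le_trans h1M h3
    have h1δ0 : 0 < 1 - δ := by linarith
    have hr0 : 0 < r := by nlinarith
    have hr1 : 1 ≤ r := by nlinarith [mul_pos hδ0 hr0]
    set w : ℝ := r ^ (-γ) with hw
    set v : ℝ := r ^ γ with hv
    have hvw : v * w = 1 := by
      rw [hv, hw, ← Real.rpow_add hr0]
      simp
    have hw0 : 0 ≤ w := Real.rpow_nonneg hr0.le _
    have hv0 : 0 ≤ v := Real.rpow_nonneg hr0.le _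
    set c : ℝ := δ * r / K with hc
    have hc1 : 1 ≤ c := le_trans h1M h4
    have hak_r : ∀ k, a k ≤ r := fun k => le_trans (ham k) (le_trans h3 (by nlinarith))
    -- LOWER BOUND
    have hT : ∑ k, (P {ω | r < a k * X k ω}).toReal = S * w := by
      rw [hSdef, Finset.sum_mul]
      exact Finset.sum_congr rfl fun k _ => hsingle k r hr1 (hak_r k)
    have hlower : S - S ^ 2 * w ≤ v * (P {ω | r < ∑ k, a k * X k ω}).toReal := by
      have hsub : (⋃ k, {ω | r < a k * X k ω}) ∩ E ⊆ {ω | r < ∑ k, a k * X k ω} := by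
        rintro ω ⟨hωU, hωE⟩
        obtain ⟨k, hk⟩ := Set.mem_iUnion.mp hωU
        have hXpos : ∀ j, 0 < X j ω := fun j => Set.mem_iInter.mp hωE j
        calc r < a k * X k ω := hk
          _ ≤ ∑ j, a j * X j ω :=
            Finset.single_le_sum (fun j _ => mul_nonneg (ha j) (hXpos j).le)
              (Finset.mem_univ k)
      have hPU : (P (⋃ k, {ω | r < a k * X k ω})).toReal ≤
          (P {ω | r < ∑ k, a k * X k ω}).toReal := by
        apply ENNReal.toReal_mono (measure_ne_top _ _)
        calc P (⋃ k, {ω | r < a k * X k ω})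
            = P ((⋃ k, {ω | r < a k * X k ω}) ∩ E) := (measure_inter_conull hEc).symm
          _ ≤ P {ω | r < ∑ k, a k * X k ω} := measure_mono hsub
      have hprodle : ∏ k, (1 - (P {ω | r < a k * X k ω}).toReal) ≤
          1 - S * w + (S * w) ^ 2 := by
        have h := pareto_aux_prod Finset.univ (fun k => (P {ω | r < a k * X k ω}).toReal)
          (fun k => ENNReal.toReal_nonneg) (fun k => hple1 _)
        rw [hT] at h
        exact h
      have hUge : S * w - (S * w) ^ 2 ≤ (P (⋃ k, {ω | r < a k * X k ω})).toReal := by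
        rw [hIprod r]
        linarith
      have hge : S * w - (S * w) ^ 2 ≤ (P {ω | r < ∑ k, a k * X k ω}).toReal :=
        le_trans hUge hPU
      have hmul := mul_le_mul_of_nonneg_left hge hv0
      have hid : v * (S * w - (S * w) ^ 2) = S - S ^ 2 * w := by
        linear_combination (S - S ^ 2 * w) * hvw
      linarith
    -- UPPER BOUND
    have hupper : v * (P {ω | r < ∑ k, a k * X k ω}).toReal ≤ S + ε / 2 + Cp * w := by
      set D : Fin K → Fin K → Set Ω :=
        fun i j => {ω | c < a i * X i ω} ∩ {ω | c < a j * X j ω} with hD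
      set B : Set Ω := ⋃ k, {ω | (1 - δ) * r < a k * X k ω} with hB
      set C : Set Ω := ⋃ i, ⋃ j, ⋃ (_ : i ≠ j), D i j with hCdef
      have hsub : {ω | r < ∑ k, a k * X k ω} ∩ E ⊆ B ∪ C := by
        rintro ω ⟨hω, hωE⟩
        have hXpos : ∀ j, 0 < X j ω := fun j => Set.mem_iInter.mp hωE j
        rcases pareto_split (fun k => a k * X k ω)
            (fun k => mul_nonneg (ha k) (hXpos k).le) hr0 hδ0 hδ1 hω with
          ⟨k, hk⟩ | ⟨i, j, hij, hi, hj⟩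
        · exact Or.inl (Set.mem_iUnion.mpr ⟨k, hk⟩)
        · exact Or.inr (Set.mem_iUnion.mpr ⟨i, Set.mem_iUnion.mpr ⟨j,
            Set.mem_iUnion.mpr ⟨hij, hi, hj⟩⟩⟩)
      have hPle : (P {ω | r < ∑ k, a k * X k ω}).toReal ≤ (P B).toReal + (P C).toReal := by
        calc (P {ω | r < ∑ k, a k * X k ω}).toReal
            = (P ({ω | r < ∑ k, a k * X k ω} ∩ E)).toReal := by
              rw [measure_inter_conull hEc]
          _ ≤ (P (B ∪ C)).toReal :=
              ENNReal.toReal_mono (measure_ne_top _ _) (measure_mono hsub)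
          _ ≤ (P B).toReal + (P C).toReal := pareto_toReal_union_le P B C
      have hak_qr : ∀ k, a k ≤ (1 - δ) * r := fun k => le_trans (ham k) h3
      have hak_c : ∀ k, a k ≤ c := fun k => le_trans (ham k) h4
      have hBle : (P B).toReal ≤ S * (q ^ (-γ) * w) := by
        calc (P B).toReal ≤ ∑ k, (P {ω | (1 - δ) * r < a k * X k ω}).toReal :=
            pareto_toReal_iUnion_le P _
          _ = S * (q ^ (-γ) * w) := by
            rw [hSdef, Finset.sum_mul]
            apply Finset.sum_congr rfl
            intro k _
            rw [hsingle k _ hqr1 (hak_qr k), h1δ, Real.mul_rpow hq0.le hr0.le, ← hw]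
      have hcval : c ^ (-γ) = (δ / (K : ℝ)) ^ (-γ) * w := by
        have hceq : c = (δ / (K : ℝ)) * r := by rw [hc]; ring
        rw [hceq, Real.mul_rpow (by positivity) hr0.le, ← hw]
      have hbound : ∀ i j : Fin K, (P (⋃ (_ : i ≠ j), D i j)).toReal ≤
          (a i ^ γ * c ^ (-γ)) * (a j ^ γ * c ^ (-γ)) := by
        intro i j
        by_cases hij : i = j
        · subst hij
          have hemp : (⋃ (_ : i ≠ i), D i i) = (∅ : Set Ω) := by simp
          rw [hemp]
          simp only [measure_empty, ENNReal.toReal_zero]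
          have hc0' : 0 ≤ c ^ (-γ) := Real.rpow_nonneg (by linarith) _
          have := Real.rpow_nonneg (ha i) γ
          positivity
        · have hfull : (⋃ (_ : i ≠ j), D i j) = D i j := by simp [hij]
          rw [hfull, hD]
          rw [hpair c i j hij, hsingle i c hc1 (hak_c i), hsingle j c hc1 (hak_c j)]
      have hCle : (P C).toReal ≤ (S * ((δ / (K : ℝ)) ^ (-γ) * w)) ^ 2 := by
        calc (P C).toReal
            ≤ ∑ i, (P (⋃ j, ⋃ (_ : i ≠ j), D i j)).toReal := pareto_toReal_iUnion_le P _
          _ ≤ ∑ i, ∑ j, (P (⋃ (_ : i ≠ j), D i j)).toReal :=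
              Finset.sum_le_sum fun i _ => pareto_toReal_iUnion_le P _
          _ ≤ ∑ i, ∑ j, (a i ^ γ * c ^ (-γ)) * (a j ^ γ * c ^ (-γ)) :=
              Finset.sum_le_sum fun i _ => Finset.sum_le_sum fun j _ => hbound i j
          _ = (∑ i, a i ^ γ * c ^ (-γ)) * (∑ j, a j ^ γ * c ^ (-γ)) :=
              (Finset.sum_mul_sum _ _ _ _).symm
          _ = (S * c ^ (-γ)) ^ 2 := by rw [← Finset.sum_mul, ← hSdef]; ring
          _ = (S * ((δ / (K : ℝ)) ^ (-γ) * w)) ^ 2 := by rw [hcval]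
      have hmul := mul_le_mul_of_nonneg_left
        (le_trans hPle (add_le_add hBle hCle)) hv0
      have hid : v * (S * (q ^ (-γ) * w) + (S * ((δ / (K : ℝ)) ^ (-γ) * w)) ^ 2) =
          S * q ^ (-γ) + Cp * w := by
        rw [hCp]
        linear_combination (S * q ^ (-γ) + S ^ 2 * ((δ / (K : ℝ)) ^ (-γ)) ^ 2 * w) * hvw
      have hqS' : S * q ^ (-γ) = S + ε / 2 := by rw [mul_comm]; exact hqS
      linarith
    -- FINISH
    rw [Real.dist_eq, abs_sub_lt_iff]
    clear_value Cp Cm w v c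
    have hCpCm : Cp ≤ Cm := by rw [hCm]; nlinarith [sq_nonneg S]
    have hS2Cm : S ^ 2 ≤ Cm := by rw [hCm]; linarith
    have hw5 : Cm * w < ε / 2 := h5
    constructor
    · have h5' : Cp * w ≤ Cm * w := mul_le_mul_of_nonneg_right hCpCm hw0
      linarith
    · have h5' : S ^ 2 * w ≤ Cm * w := mul_le_mul_of_nonneg_right hS2Cm hw0
      linarith
  obtain ⟨N, hN⟩ := eventually_atTop.mp key
  exact ⟨N, hN⟩
end

section
/- Let X_1, …, X_K be independent Pareto(γ) random variables, γ > 0, and let B_1, …, B_K ≥ 0 satisfy Σ_{k=1}^K B_k = 1. Define R = Σ_{k=1}^K B_k^{1/γ} X_k. Then lim_{r→∞} P(R > r) / r^{−γ} = 1; that is, the tail of R is asymptotically equivalent to the Pareto(γ) survival function 1 − F_{0,γ}(r) = r^{−γ}. -/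
open MeasureTheory ProbabilityTheory Filter

private lemma prod_one_sub_le_aux {ι : Type*} (s : Finset ι) (a : ι → ℝ) :
    (∀ k ∈ s, 0 ≤ a k) → (∀ k ∈ s, a k ≤ 1) →
    ∏ k ∈ s, (1 - a k) ≤ 1 - (∑ k ∈ s, a k) + (∑ k ∈ s, a k) ^ 2 := by
  induction s using Finset.cons_induction with
  | empty => simp
  | cons i s hi ih =>
    intro h0 h1
    rw [Finset.prod_cons, Finset.sum_cons]
    have ht0 : 0 ≤ ∑ k ∈ s, a k :=
      Finset.sum_nonneg fun k hk => h0 k (Finset.mem_cons_of_mem hk)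
    have hih := ih (fun k hk => h0 k (Finset.mem_cons_of_mem hk))
      (fun k hk => h1 k (Finset.mem_cons_of_mem hk))
    have hai0 : 0 ≤ a i := h0 i (Finset.mem_cons_self i s)
    have hai1 : a i ≤ 1 := h1 i (Finset.mem_cons_self i s)
    have hmul := mul_le_mul_of_nonneg_left hih (show (0:ℝ) ≤ 1 - a i by linarith)
    nlinarith [mul_nonneg hai0 ht0, mul_nonneg (mul_nonneg hai0 ht0) ht0, sq_nonneg (a i)]

set_option maxHeartbeats 1000000 in
/-- (β = 0 case of Proposition 1.) If `X 1, …, X K` are independent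
Pareto(γ) random variables (γ > 0) and `B 1, …, B K ≥ 0` sum to one, then
`R = ∑ k, (B k)^(1/γ) * X k` satisfies `P(R > r) / r^(-γ) → 1` as `r → ∞`. -/
theorem lowrank_scale_tail_pareto
    {Ω : Type*} [MeasurableSpace Ω] (P : Measure Ω) [IsProbabilityMeasure P]
    (K : ℕ) (γ : ℝ) (hγ : 0 < γ) (X : Fin K → Ω → ℝ)
    (hmeas : ∀ k, Measurable (X k))
    (hindep : iIndepFun X P)
    (htail : ∀ k, ∀ x : ℝ, 1 ≤ x → (P {ω | x < X k ω}).toReal = x ^ (-γ))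
    (hlow : ∀ k, ∀ x : ℝ, x < 1 → (P {ω | x < X k ω}).toReal = 1)
    (B : Fin K → ℝ) (hB : ∀ k, 0 ≤ B k) (hBsum : ∑ k, B k = 1)
    (R : Ω → ℝ) (hR : ∀ ω, R ω = ∑ k, (B k) ^ (1 / γ) * X k ω) :
    Tendsto (fun r : ℝ => (P {ω | r < R ω}).toReal / r ^ (-γ))
      atTop (nhds 1) := by
  classical
  have hK : 0 < K := by
    rcases Nat.eq_zero_or_pos K with h | h
    · subst h; simp at hBsum
    · exact h
  have hKR : (0:ℝ) < K := Nat.cast_pos.mpr hK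
  have hB1 : ∀ k, B k ≤ 1 := by
    intro k
    calc B k ≤ ∑ j, B j := Finset.single_le_sum (fun j _ => hB j) (Finset.mem_univ k)
      _ = 1 := hBsum
  set c : Fin K → ℝ := fun k => (B k) ^ (1 / γ) with hc
  have hc0 : ∀ k, 0 ≤ c k := fun k => Real.rpow_nonneg (hB k) _
  have hc1 : ∀ k, c k ≤ 1 := fun k => Real.rpow_le_one (hB k) (hB1 k) (by positivity)
  have hYm : ∀ k, Measurable fun ω => c k * X k ω := fun k => (hmeas k).const_mul _
  -- the X k are a.s. positive
  have hXpos_ae : ∀ k, P {ω | X k ω ≤ 0} = 0 := by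
    intro k
    have h1 : P {ω | (0:ℝ) < X k ω} = 1 :=
      (ENNReal.toReal_eq_one_iff _).mp (hlow k 0 (by norm_num))
    have hcompl : {ω | X k ω ≤ 0} = {ω | (0:ℝ) < X k ω}ᶜ := by
      ext ω; simp [not_lt]
    rw [hcompl, prob_compl_eq_zero_iff (measurableSet_lt measurable_const (hmeas k))]
    exact h1
  have hN : P (⋃ k, {ω | X k ω ≤ 0}) = 0 := measure_iUnion_null fun k => hXpos_ae k
  -- tail of the summands
  have htailY : ∀ k (t : ℝ), 1 ≤ t →
      (P {ω | t < c k * X k ω}).toReal = B k * t ^ (-γ) := by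
    intro k t ht
    rcases eq_or_lt_of_le (hB k) with hBk | hBk
    · have hck : c k = 0 := by
        rw [hc]; simp only [← hBk]
        exact Real.zero_rpow (by positivity)
      have hempty : {ω | t < c k * X k ω} = ∅ := by
        ext ω; simp only [hck, zero_mul, Set.mem_setOf_eq, Set.mem_empty_iff_false,
          iff_false, not_lt]
        linarith
      rw [hempty]; simp [← hBk]
    · have hck : 0 < c k := Real.rpow_pos_of_pos hBk _
      have hset : {ω | t < c k * X k ω} = {ω | t / c k < X k ω} := by
        ext ω; rw [Set.mem_setOf_eq, Set.mem_setOf_eq, div_lt_iff₀ hck, mul_comm]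
      have ht' : 1 ≤ t / c k := by
        rw [le_div_iff₀ hck]; nlinarith [hc1 k]
      have hcγ : (c k) ^ (-γ) = (B k)⁻¹ := by
        rw [hc]
        rw [← Real.rpow_mul (hB k)]
        rw [show (1/γ) * (-γ) = (-1:ℝ) by field_simp]
        exact Real.rpow_neg_one _
      rw [hset, htail k _ ht', Real.div_rpow (by linarith) (hc0 k), hcγ,
        div_inv_eq_mul, mul_comm]
  -- cdf of the summands
  have hcdfY : ∀ k (t : ℝ), 1 ≤ t →
      (P {ω | c k * X k ω ≤ t}).toReal = 1 - B k * t ^ (-γ) := by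
    intro k t ht
    have hcompl : {ω | c k * X k ω ≤ t} = {ω | t < c k * X k ω}ᶜ := by
      ext ω; simp [not_lt]
    rw [hcompl, prob_compl_eq_one_sub (measurableSet_lt measurable_const (hYm k)),
      ENNReal.toReal_sub_of_le prob_le_one ENNReal.one_ne_top, ENNReal.toReal_one,
      htailY k t ht]
  -- product formula from independence
  have hProd : ∀ t : ℝ, P {ω | ∀ k, c k * X k ω ≤ t} = ∏ k, P {ω | c k * X k ω ≤ t} := by
    intro t
    have h := hindep.measure_inter_preimage_eq_mul (S := Finset.univ)
      (sets := fun k => {x | c k * x ≤ t})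
      (fun i _ => measurableSet_le (measurable_id.const_mul _) measurable_const)
    have hset : (⋂ i ∈ Finset.univ, X i ⁻¹' {x | c i * x ≤ t})
        = {ω | ∀ k, c k * X k ω ≤ t} := by
      ext ω; simp [Set.preimage_setOf_eq]
    rw [← hset, h]
    rfl
  -- lower bound
  have hLB : ∀ r : ℝ, 1 ≤ r →
      r ^ (-γ) - (r ^ (-γ))^2 ≤ (P {ω | r < R ω}).toReal := by
    intro r hr
    have hr0 : (0:ℝ) < r := by linarith
    have hq0 : (0:ℝ) < r ^ (-γ) := Real.rpow_pos_of_pos hr0 _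
    set A : Set Ω := {ω | ∀ k, c k * X k ω ≤ r} with hA
    have hAm : MeasurableSet A := by
      have : A = ⋂ k, {ω | c k * X k ω ≤ r} := by ext ω; simp [hA]
      rw [this]
      exact MeasurableSet.iInter fun k => measurableSet_le (hYm k) measurable_const
    have hsub : Aᶜ ⊆ {ω | r < R ω} ∪ ⋃ k, {ω | X k ω ≤ 0} := by
      intro ω hω
      by_cases hωN : ω ∈ ⋃ k, {ω | X k ω ≤ 0}
      · exact Or.inr hωN
      · left
        simp only [hA, Set.mem_compl_iff, Set.mem_setOf_eq, not_forall, not_le] at hω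
        obtain ⟨k0, hk0⟩ := hω
        simp only [Set.mem_iUnion, Set.mem_setOf_eq, not_exists, not_le] at hωN
        have hpos : ∀ k, 0 ≤ c k * X k ω := fun k => mul_nonneg (hc0 k) (hωN k).le
        have hle : c k0 * X k0 ω ≤ R ω := by
          rw [hR ω]
          exact Finset.single_le_sum (fun k _ => hpos k) (Finset.mem_univ k0)
        exact lt_of_lt_of_le hk0 hle
    have hmeasineq : P Aᶜ ≤ P {ω | r < R ω} := by
      calc P Aᶜ ≤ P {ω | r < R ω} + P (⋃ k, {ω | X k ω ≤ 0}) :=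
            le_trans (measure_mono hsub) (measure_union_le _ _)
        _ = P {ω | r < R ω} := by rw [hN, add_zero]
    have hAval : (P A).toReal = ∏ k, (1 - B k * r ^ (-γ)) := by
      rw [hA, hProd r, ENNReal.toReal_prod]
      exact Finset.prod_congr rfl fun k _ => hcdfY k r hr
    have hprodle : ∏ k, (1 - B k * r ^ (-γ)) ≤ 1 - r ^ (-γ) + (r ^ (-γ))^2 := by
      have hq1 : r ^ (-γ) ≤ 1 := Real.rpow_le_one_of_one_le_of_nonpos hr (by linarith)
      have h := prod_one_sub_le_aux Finset.univ (fun k => B k * r ^ (-γ))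
        (fun k _ => mul_nonneg (hB k) hq0.le)
        (fun k _ => mul_le_one₀ (hB1 k) hq0.le hq1)
      have hsum : ∑ k, B k * r ^ (-γ) = r ^ (-γ) := by
        rw [← Finset.sum_mul, hBsum, one_mul]
      rw [hsum] at h
      exact h
    have hAc : (P Aᶜ).toReal = 1 - (P A).toReal := by
      rw [prob_compl_eq_one_sub hAm,
        ENNReal.toReal_sub_of_le prob_le_one ENNReal.one_ne_top, ENNReal.toReal_one]
    have hmono : (P Aᶜ).toReal ≤ (P {ω | r < R ω}).toReal :=
      ENNReal.toReal_mono (measure_ne_top P _) hmeasineq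
    rw [hAc, hAval] at hmono
    linarith
  -- the squeeze
  have hglow : Tendsto (fun r : ℝ => 1 - r ^ (-γ)) atTop (nhds 1) := by
    simpa using (tendsto_rpow_neg_atTop hγ).const_sub 1
  have hg1 : Tendsto (fun r : ℝ => (1 - r ^ (-(1/4:ℝ))) ^ (-γ)) atTop (nhds 1) := by
    have hbase : Tendsto (fun r : ℝ => 1 - r ^ (-(1/4:ℝ))) atTop (nhds 1) := by
      simpa using (tendsto_rpow_neg_atTop (show (0:ℝ) < 1/4 by norm_num)).const_sub 1
    have hcont : ContinuousAt (fun x : ℝ => x ^ (-γ)) 1 :=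
      Real.continuousAt_rpow_const 1 (-γ) (Or.inl one_ne_zero)
    have := hcont.tendsto.comp hbase
    simpa [Function.comp_def, Real.one_rpow] using this
  have hg2 : Tendsto (fun r : ℝ => (K:ℝ)^2 * ((r ^ (-(1/4:ℝ)) * r / K) ^ (-γ))^2 * r ^ γ)
      atTop (nhds 0) := by
    have heq : ∀ᶠ r : ℝ in atTop,
        ((K:ℝ)^2 * (((K:ℝ)^γ)^2)) * r ^ (-(γ/2))
          = (K:ℝ)^2 * ((r ^ (-(1/4:ℝ)) * r / K) ^ (-γ))^2 * r ^ γ := by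
      filter_upwards [eventually_gt_atTop (0:ℝ)] with r hr0
      have e1 : r ^ (-(1/4:ℝ)) * r = r ^ ((3/4:ℝ)) := by
        nth_rewrite 2 [← Real.rpow_one r]
        rw [← Real.rpow_add hr0]; norm_num
      have e2 : (r ^ ((3/4:ℝ)) / K) ^ (-γ) = (K:ℝ)^γ * r ^ ((3/4:ℝ) * (-γ)) := by
        rw [Real.div_rpow (Real.rpow_nonneg hr0.le _) hKR.le, ← Real.rpow_mul hr0.le,
          Real.rpow_neg hKR.le, div_inv_eq_mul, mul_comm]
      rw [e1, e2, show (-(γ/2)) = ((3/4:ℝ) * (-γ) + (3/4:ℝ) * (-γ)) + γ by ring,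
        Real.rpow_add hr0, Real.rpow_add hr0]
      ring
    have hlim : Tendsto (fun r : ℝ => ((K:ℝ)^2 * (((K:ℝ)^γ)^2)) * r ^ (-(γ/2)))
        atTop (nhds 0) := by
      have := (tendsto_rpow_neg_atTop (half_pos hγ)).const_mul ((K:ℝ)^2 * (((K:ℝ)^γ)^2))
      simpa using this
    exact hlim.congr' heq
  have hgup : Tendsto (fun r : ℝ =>
      (1 - r ^ (-(1/4:ℝ))) ^ (-γ)
        + (K:ℝ)^2 * ((r ^ (-(1/4:ℝ)) * r / K) ^ (-γ))^2 * r ^ γ) atTop (nhds 1) := by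
    simpa using hg1.add hg2
  refine tendsto_of_tendsto_of_tendsto_of_le_of_le' hglow hgup ?_ ?_
  · -- lower eventual bound
    filter_upwards [eventually_ge_atTop (1:ℝ)] with r hr
    have hr0 : (0:ℝ) < r := by linarith
    have hq0 : (0:ℝ) < r ^ (-γ) := Real.rpow_pos_of_pos hr0 _
    rw [le_div_iff₀ hq0]
    have := hLB r hr
    nlinarith
  · -- upper eventual bound
    have hev3 : ∀ᶠ r : ℝ in atTop, (K:ℝ) ≤ r ^ (-(1/4:ℝ)) * r := by
      have h34 : Tendsto (fun r : ℝ => r ^ ((3/4:ℝ))) atTop atTop :=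
        tendsto_rpow_atTop (by norm_num)
      filter_upwards [h34.eventually_ge_atTop (K:ℝ), eventually_gt_atTop (0:ℝ)] with r h1 h2
      have e1 : r ^ (-(1/4:ℝ)) * r = r ^ ((3/4:ℝ)) := by
        nth_rewrite 2 [← Real.rpow_one r]
        rw [← Real.rpow_add h2]; norm_num
      rw [e1]; exact h1
    filter_upwards [eventually_ge_atTop (2:ℝ),
      (tendsto_rpow_neg_atTop (show (0:ℝ) < 1/4 by norm_num)).eventually
        (eventually_le_nhds (show (0:ℝ) < 1/2 by norm_num)), hev3] with r h2r hεhalf hεrK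
    set ε : ℝ := r ^ (-(1/4:ℝ)) with hεdef
    have hr0 : (0:ℝ) < r := by linarith
    have hr1 : (1:ℝ) ≤ r := by linarith
    have hε0 : 0 < ε := Real.rpow_pos_of_pos hr0 _
    set cc : ℝ := ε * r / K with hccdef
    have hcc1 : (1:ℝ) ≤ cc := (one_le_div hKR).mpr hεrK
    have hcc0 : (0:ℝ) < cc := lt_of_lt_of_le one_pos hcc1
    have h1εr : (1:ℝ) ≤ (1 - ε) * r := by nlinarith
    have hKcc : (K:ℝ) * cc = ε * r := by
      rw [hccdef]; field_simp
    set E : Fin K → Set Ω := fun k => {ω | (1 - ε) * r < c k * X k ω} with hE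
    set D : Fin K × Fin K → Set Ω := fun p =>
      if p.1 = p.2 then ∅
      else {ω | cc < c p.1 * X p.1 ω} ∩ {ω | cc < c p.2 * X p.2 ω} with hD
    -- the inclusion
    have hincl : {ω | r < R ω} ⊆ ((⋃ k, {ω | X k ω ≤ 0}) ∪ ⋃ p, D p) ∪ ⋃ k, E k := by
      intro ω hω
      by_cases hωN : ω ∈ ⋃ k, {ω | X k ω ≤ 0}
      · exact Or.inl (Or.inl hωN)
      by_cases hωD : ω ∈ ⋃ p, D p
      · exact Or.inl (Or.inr hωD)
      right
      simp only [Set.mem_iUnion, Set.mem_setOf_eq, not_exists, not_le] at hωN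
      have hYnn : ∀ k, 0 ≤ c k * X k ω := fun k => mul_nonneg (hc0 k) (hωN k).le
      simp only [Set.mem_setOf_eq] at hω
      have hpair : ∀ j k, j ≠ k → ¬(cc < c j * X j ω ∧ cc < c k * X k ω) := by
        intro j k hjk hcontra
        apply hωD
        refine Set.mem_iUnion.mpr ⟨(j, k), ?_⟩
        simp only [hD, hjk, if_neg hjk]
        exact ⟨hcontra.1, hcontra.2⟩
      by_cases hex : ∃ k0, cc < c k0 * X k0 ω
      · obtain ⟨k0, hk0⟩ := hex
        have hrest : ∀ k, k ≠ k0 → c k * X k ω ≤ cc := by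
          intro k hk
          by_contra hlt
          push_neg at hlt
          exact hpair k0 k (fun h => hk h.symm) ⟨hk0, hlt⟩
        have hcard : ((Finset.univ.erase k0).card : ℝ) ≤ K := by
          have h1 : (Finset.univ.erase k0).card ≤ (Finset.univ : Finset (Fin K)).card :=
            Finset.card_erase_le
          have h2 : (Finset.univ : Finset (Fin K)).card = K := by simp
          exact_mod_cast h1.trans_eq h2
        have hsumrest : ∑ k ∈ Finset.univ.erase k0, (c k * X k ω) ≤ ε * r := by
          calc ∑ k ∈ Finset.univ.erase k0, (c k * X k ω)
              ≤ ∑ _k ∈ Finset.univ.erase k0, cc :=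
                Finset.sum_le_sum fun k hk => hrest k (Finset.ne_of_mem_erase hk)
            _ = ((Finset.univ.erase k0).card : ℝ) * cc := by
                rw [Finset.sum_const, nsmul_eq_mul]
            _ ≤ (K:ℝ) * cc := by nlinarith
            _ = ε * r := hKcc
        have hRω : R ω ≤ c k0 * X k0 ω + ε * r := by
          rw [hR ω, ← Finset.add_sum_erase _ _ (Finset.mem_univ k0)]
          linarith
        have hfin : (1 - ε) * r < c k0 * X k0 ω := by nlinarith
        exact Set.mem_iUnion.mpr ⟨k0, hfin⟩
      · push_neg at hex
        exfalso
        have hRsmall : R ω ≤ ε * r := by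
          rw [hR ω]
          calc ∑ k, c k * X k ω ≤ ∑ _k : Fin K, cc :=
                Finset.sum_le_sum fun k _ => hex k
            _ = (K:ℝ) * cc := by
                rw [Finset.sum_const, Finset.card_univ, Fintype.card_fin, nsmul_eq_mul]
            _ = ε * r := hKcc
        nlinarith
    -- tail of D p
    have hD_toReal : ∀ p : Fin K × Fin K, (P (D p)).toReal ≤ (cc ^ (-γ))^2 := by
      intro p
      by_cases hp : p.1 = p.2
      · simp only [hD, if_pos hp, measure_empty, ENNReal.toReal_zero]
        positivity
      · have hind : IndepFun (X p.1) (X p.2) P := hindep.indepFun hp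
        have hmul : P (D p)
            = P {ω | cc < c p.1 * X p.1 ω} * P {ω | cc < c p.2 * X p.2 ω} := by
          have h := hind.measure_inter_preimage_eq_mul
            {x | cc < c p.1 * x} {x | cc < c p.2 * x}
            (measurableSet_lt measurable_const (measurable_id.const_mul _))
            (measurableSet_lt measurable_const (measurable_id.const_mul _))
          simpa [hD, if_neg hp, Set.preimage_setOf_eq] using h
        rw [hmul, ENNReal.toReal_mul, htailY p.1 cc hcc1, htailY p.2 cc hcc1]
        have hq : 0 ≤ cc ^ (-γ) := Real.rpow_nonneg hcc0.le _
        have hBB : B p.1 * B p.2 ≤ 1 := mul_le_one₀ (hB1 _) (hB _) (hB1 _)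
        nlinarith [hB p.1, hB p.2, sq_nonneg (cc ^ (-γ))]
    -- measure chain
    have hchain : P {ω | r < R ω} ≤ (∑ p, P (D p)) + ∑ k, P (E k) := by
      calc P {ω | r < R ω}
          ≤ P (((⋃ k, {ω | X k ω ≤ 0}) ∪ ⋃ p, D p) ∪ ⋃ k, E k) := measure_mono hincl
        _ ≤ P ((⋃ k, {ω | X k ω ≤ 0}) ∪ ⋃ p, D p) + P (⋃ k, E k) := measure_union_le _ _
        _ ≤ (P (⋃ k, {ω | X k ω ≤ 0}) + P (⋃ p, D p)) + P (⋃ k, E k) := by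
            gcongr
            exact measure_union_le _ _
        _ = P (⋃ p, D p) + P (⋃ k, E k) := by rw [hN, zero_add]
        _ ≤ (∑ p, P (D p)) + ∑ k, P (E k) := by
            gcongr
            · exact measure_iUnion_fintype_le _ _
            · exact measure_iUnion_fintype_le _ _
    have hchainR : (P {ω | r < R ω}).toReal
        ≤ (∑ p, (P (D p)).toReal) + ∑ k, (P (E k)).toReal := by
      have hne : (∑ p, P (D p)) + ∑ k, P (E k) ≠ ⊤ := by
        refine ENNReal.add_ne_top.mpr ⟨?_, ?_⟩
        · exact (ENNReal.sum_lt_top.mpr fun _ _ => measure_lt_top P _).ne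
        · exact (ENNReal.sum_lt_top.mpr fun _ _ => measure_lt_top P _).ne
      have h1 := ENNReal.toReal_mono hne hchain
      rwa [ENNReal.toReal_add
          ((ENNReal.sum_lt_top.mpr fun _ _ => measure_lt_top P _).ne)
          ((ENNReal.sum_lt_top.mpr fun _ _ => measure_lt_top P _).ne),
        ENNReal.toReal_sum (fun _ _ => measure_ne_top P _),
        ENNReal.toReal_sum (fun _ _ => measure_ne_top P _)] at h1
    have hEsum : ∑ k, (P (E k)).toReal = ((1 - ε) * r) ^ (-γ) := by
      calc ∑ k, (P (E k)).toReal = ∑ k, B k * ((1 - ε) * r) ^ (-γ) :=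
            Finset.sum_congr rfl fun k _ => htailY k _ h1εr
        _ = _ := by rw [← Finset.sum_mul, hBsum, one_mul]
    have hDsum : ∑ p, (P (D p)).toReal ≤ (K:ℝ)^2 * (cc ^ (-γ))^2 := by
      calc ∑ p, (P (D p)).toReal ≤ ∑ _p : Fin K × Fin K, (cc ^ (-γ))^2 :=
            Finset.sum_le_sum fun p _ => hD_toReal p
        _ = (K:ℝ)^2 * (cc ^ (-γ))^2 := by
            rw [Finset.sum_const, Finset.card_univ, Fintype.card_prod, Fintype.card_fin,
              nsmul_eq_mul]
            push_cast
            ring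
    have hmulr : ((1 - ε) * r) ^ (-γ) = (1 - ε) ^ (-γ) * r ^ (-γ) :=
      Real.mul_rpow (by linarith) hr0.le
    have hfinal : (P {ω | r < R ω}).toReal
        ≤ (1 - ε) ^ (-γ) * r ^ (-γ) + (K:ℝ)^2 * (cc ^ (-γ))^2 := by
      rw [← hmulr]
      calc (P {ω | r < R ω}).toReal
          ≤ (∑ p, (P (D p)).toReal) + ∑ k, (P (E k)).toReal := hchainR
        _ ≤ ((K:ℝ)^2 * (cc ^ (-γ))^2) + ((1 - ε) * r) ^ (-γ) := by
            rw [hEsum]; gcongr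
        _ = ((1 - ε) * r) ^ (-γ) + (K:ℝ)^2 * (cc ^ (-γ))^2 := by ring
    have hq0 : (0:ℝ) < r ^ (-γ) := Real.rpow_pos_of_pos hr0 _
    rw [div_le_iff₀ hq0]
    have hrr : r ^ γ * r ^ (-γ) = 1 := by
      rw [← Real.rpow_add hr0]; simp
    calc (P {ω | r < R ω}).toReal
        ≤ (1 - ε) ^ (-γ) * r ^ (-γ) + (K:ℝ)^2 * (cc ^ (-γ))^2 := hfinal
      _ = (1 - ε) ^ (-γ) * r ^ (-γ)
          + (K:ℝ)^2 * (cc ^ (-γ))^2 * (r ^ γ * r ^ (-γ)) := by rw [hrr, mul_one]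
      _ = ((1 - ε) ^ (-γ) + (K:ℝ)^2 * (cc ^ (-γ))^2 * r ^ γ) * r ^ (-γ) := by ring
end

section
/- Let X_1, …, X_K be independent Pareto(γ) random variables, γ > 0, and let a_1, …, a_K ≥ 0 and b_1, …, b_K ≥ 0 be two weight vectors satisfying Σ_{k=1}^K a_k^γ = Σ_{k=1}^K b_k^γ > 0. Then lim_{r→∞} P(Σ_{k=1}^K a_k X_k > r) / P(Σ_{k=1}^K b_k X_k > r) = 1 (marginal tail-stationarity). -/
open MeasureTheory ProbabilityTheory Filter

lemma aux_exp_quad (s : ℝ) (hs : 0 ≤ s) : Real.exp (-s) ≤ 1 - s + s ^ 2 := by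
  have h1 : (1 : ℝ) + s ≤ Real.exp s := by simpa [add_comm] using Real.add_one_le_exp s
  have h2 : (0:ℝ) < 1 + s := by linarith
  have h3 : Real.exp (-s) = 1 / Real.exp s := by rw [Real.exp_neg]; ring
  have h4 : 1 / Real.exp s ≤ 1 / (1 + s) := one_div_le_one_div_of_le h2 h1
  have h5 : 1 / (1 + s) ≤ 1 - s + s ^ 2 := by
    rw [div_le_iff₀ h2]; nlinarith
  linarith [h3 ▸ h4]

lemma aux_prod_bound {n : ℕ} (q : Fin n → ℝ) (h0 : ∀ k, 0 ≤ q k) (h1 : ∀ k, q k ≤ 1) :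
    ∏ k, (1 - q k) ≤ 1 - (∑ k, q k) + (∑ k, q k) ^ 2 := by
  have hstep : ∏ k, (1 - q k) ≤ Real.exp (-∑ k, q k) := by
    have h : ∏ k, (1 - q k) ≤ ∏ k, Real.exp (-(q k)) := by
      apply Finset.prod_le_prod
      · intro k _; linarith [h1 k]
      · intro k _; linarith [Real.add_one_le_exp (-(q k))]
    calc ∏ k, (1 - q k) ≤ ∏ k, Real.exp (-(q k)) := h
      _ = Real.exp (∑ k, -(q k)) := (Real.exp_sum _ _).symm
      _ = Real.exp (-∑ k, q k) := by rw [← Finset.sum_neg_distrib]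
  exact hstep.trans (aux_exp_quad _ (Finset.sum_nonneg fun k _ => h0 k))

lemma aux_tail {Ω : Type*} [MeasurableSpace Ω] (P : Measure Ω) [IsProbabilityMeasure P]
    (γ : ℝ) (hγ : 0 < γ) (Y : Ω → ℝ)
    (htail : ∀ x : ℝ, 1 ≤ x → (P {ω | x < Y ω}).toReal = x ^ (-γ))
    (c : ℝ) (hc : 0 ≤ c) (x : ℝ) (hx : 0 < x) (hcx : c ≤ x) :
    (P {ω | x < c * Y ω}).toReal = c ^ γ * x ^ (-γ) := by
  rcases eq_or_lt_of_le hc with h | h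
  · have hempty : {ω | x < c * Y ω} = (∅ : Set Ω) := by
      ext ω; simp only [Set.mem_setOf_eq, Set.mem_empty_iff_false, iff_false, not_lt, ← h]
      simpa using hx.le
    rw [hempty, ← h, Real.zero_rpow hγ.ne']
    simp
  · have hset : {ω | x < c * Y ω} = {ω | x / c < Y ω} := by
      ext ω; simp [div_lt_iff₀ h, mul_comm]
    rw [hset, htail _ ((one_le_div h).mpr hcx)]
    rw [Real.div_rpow hx.le h.le, Real.rpow_neg h.le, div_inv_eq_mul, mul_comm]

lemma aux_ae_one_le {Ω : Type*} [MeasurableSpace Ω] (P : Measure Ω) [IsProbabilityMeasure P]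
    (K : ℕ) (X : Fin K → Ω → ℝ) (hmeas : ∀ k, Measurable (X k))
    (hlow : ∀ k, ∀ x : ℝ, x < 1 → (P {ω | x < X k ω}).toReal = 1) :
    ∀ᵐ ω ∂P, ∀ k, 1 ≤ X k ω := by
  rw [ae_all_iff]
  intro k
  rw [ae_iff]
  have hsub : {ω | ¬ 1 ≤ X k ω} ⊆ ⋃ n : ℕ, {ω | X k ω ≤ 1 - 1 / (n + 1)} := by
    intro ω hω
    simp only [Set.mem_setOf_eq, not_le] at hω
    obtain ⟨n, hn⟩ := exists_nat_one_div_lt (show (0:ℝ) < 1 - X k ω by linarith)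
    exact Set.mem_iUnion.2 ⟨n, by simp only [Set.mem_setOf_eq]; linarith⟩
  refine measure_mono_null hsub (measure_iUnion_null fun n => ?_)
  have hx : (1 : ℝ) - 1 / (n + 1) < 1 := by
    have : (0:ℝ) < 1 / (n + 1) := by positivity
    linarith
  have hone : P {ω | 1 - 1 / (n + 1 : ℝ) < X k ω} = 1 :=
    (ENNReal.toReal_eq_one_iff _).mp (hlow k _ hx)
  have hms : MeasurableSet {ω | (1 : ℝ) - 1 / (n + 1) < X k ω} :=
    measurableSet_lt measurable_const (hmeas k)
  have hcompl := prob_compl_eq_one_sub (μ := P) hms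
  rw [hone, tsub_self] at hcompl
  have heq : {ω | X k ω ≤ 1 - 1 / (n + 1 : ℝ)} = {ω | (1:ℝ) - 1 / (n + 1) < X k ω}ᶜ := by
    ext ω; simp [not_lt]
  rw [heq, hcompl]

lemma aux_key {Ω : Type*} [MeasurableSpace Ω] (P : Measure Ω) [IsProbabilityMeasure P]
    (K : ℕ) (hK : 0 < K) (γ : ℝ) (hγ : 0 < γ) (X : Fin K → Ω → ℝ)
    (hmeas : ∀ k, Measurable (X k))
    (hindep : iIndepFun X P)
    (htail : ∀ k, ∀ x : ℝ, 1 ≤ x → (P {ω | x < X k ω}).toReal = x ^ (-γ))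
    (hlow : ∀ k, ∀ x : ℝ, x < 1 → (P {ω | x < X k ω}).toReal = 1)
    (c : Fin K → ℝ) (hc : ∀ k, 0 ≤ c k) :
    Tendsto (fun r : ℝ => (P {ω | r < ∑ k, c k * X k ω}).toReal * r ^ γ)
      atTop (nhds (∑ k, (c k) ^ γ)) := by
  set S := ∑ k, (c k) ^ γ with hSdef
  have hS0 : 0 ≤ S := Finset.sum_nonneg fun k _ => Real.rpow_nonneg (hc k) γ
  -- basic sets
  set A : ℝ → Fin K → Set Ω := fun x k => X k ⁻¹' {t | x < c k * t} with hAdef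
  have hAm : ∀ (x : ℝ) (k : Fin K), MeasurableSet {t : ℝ | x < c k * t} := fun x k =>
    measurableSet_lt measurable_const (measurable_const_mul _)
  have hAset : ∀ (x : ℝ) (k : Fin K), MeasurableSet (A x k) := fun x k => hmeas k (hAm x k)
  have hprob1 : ∀ s : Set Ω, (P s).toReal ≤ 1 := fun s => by
    simpa using ENNReal.toReal_mono ENNReal.one_ne_top (prob_le_one (μ := P) (s := s))
  have hprob0 : ∀ s : Set Ω, 0 ≤ (P s).toReal := fun s => ENNReal.toReal_nonneg
  have hAval : ∀ (x : ℝ) (k : Fin K), 0 < x → c k ≤ x →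
      (P (A x k)).toReal = (c k) ^ γ * x ^ (-γ) := fun x k hx hcx =>
    aux_tail P γ hγ (X k) (htail k) (c k) (hc k) x hx hcx
  have hsumval : ∀ x : ℝ, 0 < x → (∀ k, c k ≤ x) →
      ∑ k, (P (A x k)).toReal = S * x ^ (-γ) := by
    intro x hx hcx
    rw [hSdef, Finset.sum_mul]
    exact Finset.sum_congr rfl fun k _ => hAval x k hx (hcx k)
  have hae := aux_ae_one_le P K X hmeas hlow
  -- LOWER BOUND
  have lower : ∀ᶠ r in atTop,
      S - S ^ 2 * r ^ (-γ) ≤ (P {ω | r < ∑ k, c k * X k ω}).toReal * r ^ γ := by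
    filter_upwards [eventually_gt_atTop 0, eventually_all.2 fun k => eventually_ge_atTop (c k)]
      with r hr hcr
    have hsub : P (⋃ k, A r k) ≤ P {ω | r < ∑ k, c k * X k ω} := by
      apply measure_mono_ae
      filter_upwards [hae] with ω hω hmem
      obtain ⟨k, hk⟩ := Set.mem_iUnion.mp hmem
      have hk' : r < c k * X k ω := hk
      have hle : c k * X k ω ≤ ∑ j, c j * X j ω :=
        Finset.single_le_sum (f := fun j => c j * X j ω)
          (fun j _ => mul_nonneg (hc j) (le_trans zero_le_one (hω j))) (Finset.mem_univ k)
      exact lt_of_lt_of_le hk' hle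
    -- P union = 1 - prod of complements
    have hcap : P (⋂ k, (A r k)ᶜ) = ∏ k, P ((A r k)ᶜ) := by
      have h := (iIndepFun_iff_measure_inter_preimage_eq_mul.mp hindep) Finset.univ
        (sets := fun k => {t | r < c k * t}ᶜ) (fun i _ => (hAm r i).compl)
      simpa [A, Set.preimage_compl] using h
    have key1 : (P (⋃ k, A r k)).toReal = 1 - ∏ k, (1 - (P (A r k)).toReal) := by
      have hms : MeasurableSet (⋃ k, A r k) := MeasurableSet.iUnion fun k => hAset r k
      have h1 : P ((⋃ k, A r k)ᶜ) = ∏ k, P ((A r k)ᶜ) := by rw [Set.compl_iUnion]; exact hcap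
      have h2 := prob_compl_eq_one_sub (μ := P) hms
      have h3 : (P ((⋃ k, A r k)ᶜ)).toReal = 1 - (P (⋃ k, A r k)).toReal := by
        rw [h2, ENNReal.toReal_sub_of_le prob_le_one ENNReal.one_ne_top]; simp
      have h4 : (P ((⋃ k, A r k)ᶜ)).toReal = ∏ k, (1 - (P (A r k)).toReal) := by
        rw [h1, ENNReal.toReal_prod]
        refine Finset.prod_congr rfl fun k _ => ?_
        rw [prob_compl_eq_one_sub (hAset r k),
          ENNReal.toReal_sub_of_le prob_le_one ENNReal.one_ne_top]
        simp
      linarith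
    have hprodb := aux_prod_bound (fun k => (P (A r k)).toReal)
      (fun k => hprob0 _) (fun k => hprob1 _)
    have hsum : ∑ k, (P (A r k)).toReal = S * r ^ (-γ) := hsumval r hr hcr
    have hU : (∑ k, (P (A r k)).toReal) - (∑ k, (P (A r k)).toReal) ^ 2
        ≤ (P {ω | r < ∑ k, c k * X k ω}).toReal := by
      have hU1 : (∑ k, (P (A r k)).toReal) - (∑ k, (P (A r k)).toReal) ^ 2
          ≤ (P (⋃ k, A r k)).toReal := by rw [key1]; linarith
      exact hU1.trans (ENNReal.toReal_mono (measure_ne_top P _) hsub)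
    rw [hsum] at hU
    have hrpow : r ^ (-γ) * r ^ γ = 1 := by
      rw [← Real.rpow_add hr]; simp
    have hmul := mul_le_mul_of_nonneg_right hU (Real.rpow_nonneg hr.le γ)
    calc S - S ^ 2 * r ^ (-γ)
        = (S * r ^ (-γ) - (S * r ^ (-γ)) ^ 2) * r ^ γ := by
          have : (S * r ^ (-γ) - (S * r ^ (-γ)) ^ 2) * r ^ γ
              = S * (r ^ (-γ) * r ^ γ) - S ^ 2 * r ^ (-γ) * (r ^ (-γ) * r ^ γ) := by ring
          rw [this, hrpow]; ring
      _ ≤ (P {ω | r < ∑ k, c k * X k ω}).toReal * r ^ γ := hmul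
  -- UPPER BOUND
  have upper : ∀ δ : ℝ, 0 < δ → δ < 1 → ∀ᶠ r in atTop,
      (P {ω | r < ∑ k, c k * X k ω}).toReal * r ^ γ
        ≤ S * (1 - δ) ^ (-γ) + (S * (δ / K) ^ (-γ)) ^ 2 * r ^ (-γ) := by
    intro δ hδ0 hδ1
    have hKpos : (0:ℝ) < K := Nat.cast_pos.mpr hK
    have hδK : 0 < δ / (K:ℝ) := by positivity
    have h1t : Tendsto (fun r : ℝ => (1 - δ) * r) atTop atTop :=
      tendsto_id.const_mul_atTop (by linarith)
    have h2t : Tendsto (fun r : ℝ => (δ / (K:ℝ)) * r) atTop atTop :=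
      tendsto_id.const_mul_atTop hδK
    filter_upwards [eventually_gt_atTop 0,
      h1t.eventually (eventually_all.2 fun k => eventually_ge_atTop (c k)),
      h2t.eventually (eventually_all.2 fun k => eventually_ge_atTop (c k))] with r hr h1 h2
    have hx1 : (0:ℝ) < (1 - δ) * r := mul_pos (by linarith) hr
    have hx2 : (0:ℝ) < (δ / (K:ℝ)) * r := mul_pos hδK hr
    -- inclusion
    have hsub : {ω | r < ∑ k, c k * X k ω} ⊆
        (⋃ k, A ((1 - δ) * r) k) ∪
          (⋃ i, ⋃ j, ⋃ (_ : i ≠ j), A ((δ / (K:ℝ)) * r) i ∩ A ((δ / (K:ℝ)) * r) j) := by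
      intro ω hω
      have hω' : r < ∑ k, c k * X k ω := hω
      by_contra hcon
      rw [Set.mem_union] at hcon
      push_neg at hcon
      obtain ⟨hA', hB'⟩ := hcon
      simp only [Set.mem_iUnion, not_exists] at hA' hB'
      have hA'' : ∀ k, c k * X k ω ≤ (1 - δ) * r := fun k => not_lt.mp (hA' k)
      have hB'' : ∀ i j, i ≠ j →
          ¬((δ / (K:ℝ)) * r < c i * X i ω ∧ (δ / (K:ℝ)) * r < c j * X j ω) := by
        intro i j hij hcontra
        exact hB' i j hij ⟨hcontra.1, hcontra.2⟩
      set T := Finset.univ.filter (fun k => (δ / (K:ℝ)) * r < c k * X k ω) with hTdef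
      rcases T.eq_empty_or_nonempty with hT | ⟨j, hj⟩
      · have hall : ∀ k, c k * X k ω ≤ (δ / (K:ℝ)) * r := fun k => by
          by_contra h
          have hmem : k ∈ T := Finset.mem_filter.mpr ⟨Finset.mem_univ k, not_le.mp h⟩
          rw [hT] at hmem
          exact Finset.notMem_empty k hmem
        have hsumle : ∑ k, c k * X k ω ≤ (K:ℝ) * ((δ / (K:ℝ)) * r) := by
          calc ∑ k, c k * X k ω ≤ ∑ _k : Fin K, (δ / (K:ℝ)) * r :=
                Finset.sum_le_sum fun k _ => hall k
            _ = (K:ℝ) * ((δ / (K:ℝ)) * r) := by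
                simp [Finset.sum_const, Finset.card_univ, nsmul_eq_mul]
        have hKx2 : (K:ℝ) * ((δ / (K:ℝ)) * r) = δ * r := by field_simp
        nlinarith
      · have hjT : (δ / (K:ℝ)) * r < c j * X j ω := (Finset.mem_filter.mp hj).2
        have huniq : ∀ k, k ≠ j → c k * X k ω ≤ (δ / (K:ℝ)) * r := by
          intro k hk
          by_contra h
          exact hB'' k j hk ⟨not_le.mp h, hjT⟩
        have hsplit : ∑ k, c k * X k ω
            = c j * X j ω + ∑ k ∈ Finset.univ.erase j, c k * X k ω :=
          (Finset.add_sum_erase _ _ (Finset.mem_univ j)).symm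
        have hbound : ∑ k ∈ Finset.univ.erase j, c k * X k ω
            ≤ ((K:ℝ) - 1) * ((δ / (K:ℝ)) * r) := by
          calc ∑ k ∈ Finset.univ.erase j, c k * X k ω
              ≤ ∑ _k ∈ Finset.univ.erase j, (δ / (K:ℝ)) * r :=
                Finset.sum_le_sum fun k hk => huniq k (Finset.ne_of_mem_erase hk)
            _ = ((K:ℝ) - 1) * ((δ / (K:ℝ)) * r) := by
                rw [Finset.sum_const, Finset.card_erase_of_mem (Finset.mem_univ j),
                  Finset.card_univ, Fintype.card_fin, nsmul_eq_mul, Nat.cast_sub hK]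
                norm_num
        have hKm1 : ((K:ℝ) - 1) * ((δ / (K:ℝ)) * r) ≤ δ * r := by
          have hstep : ((K:ℝ) - 1) * ((δ / (K:ℝ)) * r) ≤ (K:ℝ) * ((δ / (K:ℝ)) * r) :=
            mul_le_mul_of_nonneg_right (by linarith) hx2.le
          have hKx2 : (K:ℝ) * ((δ / (K:ℝ)) * r) = δ * r := by field_simp
          linarith
        have hjb : c j * X j ω ≤ (1 - δ) * r := hA'' j
        nlinarith
    -- measure bounds
    have hPA : (P (⋃ k, A ((1 - δ) * r) k)).toReal ≤ ∑ k, (P (A ((1 - δ) * r) k)).toReal := by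
      have hle := measure_iUnion_fintype_le P (A ((1 - δ) * r))
      have hfin : (∑ k, P (A ((1 - δ) * r) k)) ≠ ⊤ :=
        (ENNReal.sum_lt_top.mpr fun k _ => (measure_ne_top P _).lt_top).ne
      calc (P (⋃ k, A ((1 - δ) * r) k)).toReal
          ≤ (∑ k, P (A ((1 - δ) * r) k)).toReal := ENNReal.toReal_mono hfin hle
        _ = ∑ k, (P (A ((1 - δ) * r) k)).toReal :=
            ENNReal.toReal_sum fun k _ => measure_ne_top P _
    have hPB : (P (⋃ i, ⋃ j, ⋃ (_ : i ≠ j),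
          A ((δ / (K:ℝ)) * r) i ∩ A ((δ / (K:ℝ)) * r) j)).toReal
        ≤ (∑ k, (P (A ((δ / (K:ℝ)) * r) k)).toReal) ^ 2 := by
      set x2 := (δ / (K:ℝ)) * r with hx2def
      have hstep : P (⋃ i, ⋃ j, ⋃ (_ : i ≠ j), A x2 i ∩ A x2 j)
          ≤ ∑ i, ∑ j, P (A x2 i) * P (A x2 j) := by
        calc P (⋃ i, ⋃ j, ⋃ (_ : i ≠ j), A x2 i ∩ A x2 j)
            ≤ ∑ i, P (⋃ j, ⋃ (_ : i ≠ j), A x2 i ∩ A x2 j) := measure_iUnion_fintype_le P _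
          _ ≤ ∑ i, ∑ j, P (⋃ (_ : i ≠ j), A x2 i ∩ A x2 j) :=
              Finset.sum_le_sum fun i _ => measure_iUnion_fintype_le P _
          _ ≤ ∑ i, ∑ j, P (A x2 i) * P (A x2 j) := by
              refine Finset.sum_le_sum fun i _ => Finset.sum_le_sum fun j _ => ?_
              by_cases hij : i = j
              · subst hij
                simp
              · have hmul := (hindep.indepFun hij).measure_inter_preimage_eq_mul
                  (μ := P) _ _ (hAm x2 i) (hAm x2 j)
                calc P (⋃ (_ : i ≠ j), A x2 i ∩ A x2 j)
                    ≤ P (A x2 i ∩ A x2 j) :=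
                      measure_mono (Set.iUnion_subset fun _ => subset_rfl)
                  _ = P (A x2 i) * P (A x2 j) := hmul
      have hfin : (∑ i, ∑ j, P (A x2 i) * P (A x2 j)) ≠ ⊤ :=
        (ENNReal.sum_lt_top.mpr fun i _ => (ENNReal.sum_lt_top.mpr fun j _ =>
          (ENNReal.mul_ne_top (measure_ne_top P _) (measure_ne_top P _)).lt_top)).ne
      calc (P (⋃ i, ⋃ j, ⋃ (_ : i ≠ j), A x2 i ∩ A x2 j)).toReal
          ≤ (∑ i, ∑ j, P (A x2 i) * P (A x2 j)).toReal := ENNReal.toReal_mono hfin hstep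
        _ = ∑ i, ∑ j, (P (A x2 i)).toReal * (P (A x2 j)).toReal := by
            rw [ENNReal.toReal_sum fun i _ =>
              (ENNReal.sum_lt_top.mpr fun j _ =>
                (ENNReal.mul_ne_top (measure_ne_top P _) (measure_ne_top P _)).lt_top).ne]
            refine Finset.sum_congr rfl fun i _ => ?_
            rw [ENNReal.toReal_sum fun j _ =>
              ENNReal.mul_ne_top (measure_ne_top P _) (measure_ne_top P _)]
            exact Finset.sum_congr rfl fun j _ => ENNReal.toReal_mul
        _ = (∑ k, (P (A x2 k)).toReal) ^ 2 := by
            rw [sq, Finset.sum_mul_sum]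
    have hs1 : ∑ k, (P (A ((1 - δ) * r) k)).toReal = S * ((1 - δ) * r) ^ (-γ) :=
      hsumval _ hx1 h1
    have hs2 : ∑ k, (P (A ((δ / (K:ℝ)) * r) k)).toReal = S * ((δ / (K:ℝ)) * r) ^ (-γ) :=
      hsumval _ hx2 h2
    have hg : (P {ω | r < ∑ k, c k * X k ω}).toReal
        ≤ S * ((1 - δ) * r) ^ (-γ) + (S * ((δ / (K:ℝ)) * r) ^ (-γ)) ^ 2 := by
      have h0 : P {ω | r < ∑ k, c k * X k ω}
          ≤ P (⋃ k, A ((1 - δ) * r) k) + P (⋃ i, ⋃ j, ⋃ (_ : i ≠ j),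
              A ((δ / (K:ℝ)) * r) i ∩ A ((δ / (K:ℝ)) * r) j) :=
        (measure_mono hsub).trans (measure_union_le _ _)
      have hfin : (P (⋃ k, A ((1 - δ) * r) k) + P (⋃ i, ⋃ j, ⋃ (_ : i ≠ j),
          A ((δ / (K:ℝ)) * r) i ∩ A ((δ / (K:ℝ)) * r) j)) ≠ ⊤ :=
        ENNReal.add_ne_top.mpr ⟨measure_ne_top P _, measure_ne_top P _⟩
      have h1' := ENNReal.toReal_mono hfin h0
      rw [ENNReal.toReal_add (measure_ne_top P _) (measure_ne_top P _)] at h1'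
      calc (P {ω | r < ∑ k, c k * X k ω}).toReal
          ≤ (P (⋃ k, A ((1 - δ) * r) k)).toReal + (P (⋃ i, ⋃ j, ⋃ (_ : i ≠ j),
              A ((δ / (K:ℝ)) * r) i ∩ A ((δ / (K:ℝ)) * r) j)).toReal := h1'
        _ ≤ S * ((1 - δ) * r) ^ (-γ) + (S * ((δ / (K:ℝ)) * r) ^ (-γ)) ^ 2 := by
            have := hPB
            rw [hs2] at this
            rw [hs1] at hPA
            linarith
    -- multiply by r ^ γ
    have hrpow : r ^ (-γ) * r ^ γ = 1 := by rw [← Real.rpow_add hr]; simp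
    have he1 : ((1 - δ) * r) ^ (-γ) = (1 - δ) ^ (-γ) * r ^ (-γ) :=
      Real.mul_rpow (by linarith) hr.le
    have he2 : ((δ / (K:ℝ)) * r) ^ (-γ) = (δ / (K:ℝ)) ^ (-γ) * r ^ (-γ) :=
      Real.mul_rpow hδK.le hr.le
    rw [he1, he2] at hg
    have hmul := mul_le_mul_of_nonneg_right hg (Real.rpow_nonneg hr.le γ)
    calc (P {ω | r < ∑ k, c k * X k ω}).toReal * r ^ γ
        ≤ (S * ((1 - δ) ^ (-γ) * r ^ (-γ))
            + (S * ((δ / (K:ℝ)) ^ (-γ) * r ^ (-γ))) ^ 2) * r ^ γ := hmul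
      _ = S * (1 - δ) ^ (-γ) * (r ^ (-γ) * r ^ γ)
            + (S * (δ / (K:ℝ)) ^ (-γ)) ^ 2 * r ^ (-γ) * (r ^ (-γ) * r ^ γ) := by ring
      _ = S * (1 - δ) ^ (-γ) + (S * (δ / (K:ℝ)) ^ (-γ)) ^ 2 * r ^ (-γ) := by
          rw [hrpow]; ring
  -- EPSILON ARGUMENT
  rw [Metric.tendsto_nhds]
  intro ε hε
  have hL : Tendsto (fun r : ℝ => S ^ 2 * r ^ (-γ)) atTop (nhds 0) := by
    simpa using (tendsto_rpow_neg_atTop hγ).const_mul (S ^ 2)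
  have hLev : ∀ᶠ r in atTop, S ^ 2 * r ^ (-γ) < ε := hL.eventually (eventually_lt_nhds hε)
  -- choose δ
  have hB1 : 1 < 1 + ε / (2 * (S + 1)) := by
    have : 0 < ε / (2 * (S + 1)) := by positivity
    linarith
  have hB0 : (0:ℝ) < 1 + ε / (2 * (S + 1)) := by linarith
  set t := (1 + ε / (2 * (S + 1))) ^ (-(1 / γ)) with htdef
  have ht0 : 0 < t := Real.rpow_pos_of_pos hB0 _
  have ht1 : t < 1 := Real.rpow_lt_one_of_one_lt_of_neg hB1 (by positivity |> neg_neg_iff_pos.mpr)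
  have hδ0 : 0 < 1 - t := by linarith
  have hδ1 : 1 - t < 1 := by linarith
  have htpow : (1 - (1 - t)) ^ (-γ) = 1 + ε / (2 * (S + 1)) := by
    have h1 : (1:ℝ) - (1 - t) = t := by ring
    rw [h1, htdef, ← Real.rpow_mul hB0.le,
      show (-(1 / γ)) * (-γ) = 1 by field_simp, Real.rpow_one]
  have hSB : S * (1 + ε / (2 * (S + 1))) ≤ S + ε / 2 := by
    have hu0 : 0 ≤ ε / (2 * (S + 1)) := by positivity
    have hueq : ε / (2 * (S + 1)) * (2 * (S + 1)) = ε := div_mul_cancel₀ _ (by positivity)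
    nlinarith
  have hupper := upper (1 - t) hδ0 hδ1
  have hC : Tendsto (fun r : ℝ => (S * ((1 - t) / (K:ℝ)) ^ (-γ)) ^ 2 * r ^ (-γ)) atTop (nhds 0) := by
    simpa using (tendsto_rpow_neg_atTop hγ).const_mul ((S * ((1 - t) / (K:ℝ)) ^ (-γ)) ^ 2)
  have hCev : ∀ᶠ r in atTop, (S * ((1 - t) / (K:ℝ)) ^ (-γ)) ^ 2 * r ^ (-γ) < ε / 2 :=
    hC.eventually (eventually_lt_nhds (by positivity))
  filter_upwards [lower, hupper, hLev, hCev] with r h1 h2 h3 h4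
  rw [Real.dist_eq, abs_lt]
  rw [htpow] at h2
  constructor
  · linarith
  · linarith


/-- (Marginal tail-stationarity, corollary to Proposition 1.)
If `X 1, …, X K` are independent Pareto(γ) random variables (γ > 0) and the nonnegative
weight vectors `a`, `b` satisfy `∑ k, (a k)^γ = ∑ k, (b k)^γ > 0`, then
`P(∑ k, a k * X k > r) / P(∑ k, b k * X k > r) → 1` as `r → ∞`. -/
theorem marginal_tail_stationarity
    {Ω : Type*} [MeasurableSpace Ω] (P : Measure Ω) [IsProbabilityMeasure P]
    (K : ℕ) (γ : ℝ) (hγ : 0 < γ) (X : Fin K → Ω → ℝ)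
    (hmeas : ∀ k, Measurable (X k))
    (hindep : iIndepFun X P)
    (htail : ∀ k, ∀ x : ℝ, 1 ≤ x → (P {ω | x < X k ω}).toReal = x ^ (-γ))
    (hlow : ∀ k, ∀ x : ℝ, x < 1 → (P {ω | x < X k ω}).toReal = 1)
    (a b : Fin K → ℝ) (ha : ∀ k, 0 ≤ a k) (hb : ∀ k, 0 ≤ b k)
    (hab : ∑ k, (a k) ^ γ = ∑ k, (b k) ^ γ) (hpos : 0 < ∑ k, (b k) ^ γ) :
    Tendsto (fun r : ℝ =>
        (P {ω | r < ∑ k, a k * X k ω}).toReal / (P {ω | r < ∑ k, b k * X k ω}).toReal)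
      atTop (nhds 1) := by
  have hK : 0 < K := by
    rcases Nat.eq_zero_or_pos K with h | h
    · subst h
      simp at hpos
    · exact h
  have kA := aux_key P K hK γ hγ X hmeas hindep htail hlow a ha
  have kB := aux_key P K hK γ hγ X hmeas hindep htail hlow b hb
  have hq : Tendsto (fun r : ℝ =>
      ((P {ω | r < ∑ k, a k * X k ω}).toReal * r ^ γ)
        / ((P {ω | r < ∑ k, b k * X k ω}).toReal * r ^ γ)) atTop
      (nhds ((∑ k, (a k) ^ γ) / (∑ k, (b k) ^ γ))) := kA.div kB hpos.ne'
  rw [hab, div_self hpos.ne'] at hq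
  refine hq.congr' ?_
  filter_upwards [eventually_gt_atTop 0] with r hr
  rw [mul_div_mul_right _ _ (ne_of_gt (Real.rpow_pos_of_pos hr γ))]
end

section
/- Let X_1, …, X_K be independent Pareto(γ) random variables, γ > 0, and let a_1, …, a_K ≥ 0 and b_1, …, b_K ≥ 0 be weight vectors, not both identically zero. Then lim_{r→∞} r^γ · P(Σ_{k=1}^K a_k X_k > r and Σ_{k=1}^K b_k X_k > r) = Σ_{k=1}^K min(a_k, b_k)^γ. -/
open MeasureTheory ProbabilityTheory Filter

set_option maxHeartbeats 2000000

lemma bonferroni_aux {Ω : Type*} [MeasurableSpace Ω] (μ : Measure Ω) {ι : Type*} [DecidableEq ι]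
    (A : ι → Set Ω) (hA : ∀ i, MeasurableSet (A i)) (s : Finset ι) :
    ∑ k ∈ s, μ (A k) ≤ μ (⋃ k ∈ s, A k) + ∑ j ∈ s, ∑ k ∈ s.erase j, μ (A j ∩ A k) := by
  induction s using Finset.induction_on with
  | empty => simp
  | @insert i s hi ih =>
    have hUs : MeasurableSet (⋃ k ∈ s, A k) := s.measurableSet_biUnion (fun k _ => hA k)
    rw [Finset.sum_insert hi]
    have h2 : μ (A i) + μ (⋃ k ∈ s, A k)
        = μ (⋃ k ∈ insert i s, A k) + μ (A i ∩ ⋃ k ∈ s, A k) := by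
      rw [Finset.set_biUnion_insert, measure_union_add_inter _ hUs]
    have h3 : μ (A i ∩ ⋃ k ∈ s, A k) ≤ ∑ k ∈ s, μ (A i ∩ A k) := by
      rw [Set.inter_iUnion₂]
      exact measure_biUnion_finset_le s _
    have h4 : ∑ k ∈ s, μ (A i ∩ A k) + ∑ j ∈ s, ∑ k ∈ s.erase j, μ (A j ∩ A k)
        ≤ ∑ j ∈ insert i s, ∑ k ∈ (insert i s).erase j, μ (A j ∩ A k) := by
      rw [Finset.sum_insert hi, Finset.erase_insert hi]
      refine add_le_add_right (Finset.sum_le_sum fun j hj => ?_) _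
      exact Finset.sum_le_sum_of_subset (Finset.erase_subset_erase _ (Finset.subset_insert i s))
    calc μ (A i) + ∑ k ∈ s, μ (A k)
        ≤ (μ (A i) + μ (⋃ k ∈ s, A k)) + ∑ j ∈ s, ∑ k ∈ s.erase j, μ (A j ∩ A k) := by
          rw [add_assoc]; exact add_le_add_right ih _
      _ = μ (⋃ k ∈ insert i s, A k)
            + (μ (A i ∩ ⋃ k ∈ s, A k) + ∑ j ∈ s, ∑ k ∈ s.erase j, μ (A j ∩ A k)) := by
          rw [h2, add_assoc]
      _ ≤ μ (⋃ k ∈ insert i s, A k)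
            + (∑ k ∈ s, μ (A i ∩ A k) + ∑ j ∈ s, ∑ k ∈ s.erase j, μ (A j ∩ A k)) :=
          add_le_add_right (add_le_add_left h3 _) _
      _ ≤ _ := add_le_add_right h4 _

/-- (Key lemma in the proof of Proposition 2.) If `X 1, …, X K` are
independent Pareto(γ) random variables (γ > 0) and `a`, `b` are nonnegative weight vectors,
not both identically zero, then
`r^γ · P(∑ k, a k * X k > r and ∑ k, b k * X k > r) → ∑ k, min (a k) (b k) ^ γ` as `r → ∞`. -/
theorem joint_tail_weighted_sums_pareto
    {Ω : Type*} [MeasurableSpace Ω] (P : Measure Ω) [IsProbabilityMeasure P]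
    (K : ℕ) (γ : ℝ) (hγ : 0 < γ) (X : Fin K → Ω → ℝ)
    (hmeas : ∀ k, Measurable (X k))
    (hindep : iIndepFun X P)
    (htail : ∀ k, ∀ x : ℝ, 1 ≤ x → (P {ω | x < X k ω}).toReal = x ^ (-γ))
    (hlow : ∀ k, ∀ x : ℝ, x < 1 → (P {ω | x < X k ω}).toReal = 1)
    (a b : Fin K → ℝ) (ha : ∀ k, 0 ≤ a k) (hb : ∀ k, 0 ≤ b k)
    (hne : (∃ k, a k ≠ 0) ∨ (∃ k, b k ≠ 0)) :
    Tendsto (fun r : ℝ =>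
        r ^ γ * (P {ω | r < ∑ k, a k * X k ω ∧ r < ∑ k, b k * X k ω}).toReal)
      atTop (nhds (∑ k, min (a k) (b k) ^ γ)) := by
  classical
  set c : Fin K → ℝ := fun k => min (a k) (b k) with hc
  set S : ℝ := ∑ k, c k ^ γ with hSdef
  have hc0 : ∀ k, 0 ≤ c k := fun k => le_min (ha k) (hb k)
  have hca : ∀ k, c k ≤ a k := fun k => min_le_left _ _
  have hcb : ∀ k, c k ≤ b k := fun k => min_le_right _ _
  set D : ℝ := ∑ k, (a k + b k) with hDdef
  have hD : 0 < D := by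
    rcases hne with ⟨k, hk⟩ | ⟨k, hk⟩
    · exact Finset.sum_pos' (fun i _ => add_nonneg (ha i) (hb i))
        ⟨k, Finset.mem_univ k, by
          have h1 := (ha k).lt_of_ne (Ne.symm hk); have := hb k; linarith⟩
    · exact Finset.sum_pos' (fun i _ => add_nonneg (ha i) (hb i))
        ⟨k, Finset.mem_univ k, by
          have h1 := (hb k).lt_of_ne (Ne.symm hk); have := ha k; linarith⟩
  have hcD : ∀ k, c k ≤ D := by
    intro k
    calc c k ≤ a k + b k := by have := hca k; have := hb k; linarith
      _ ≤ D := Finset.single_le_sum (fun i _ => add_nonneg (ha i) (hb i)) (Finset.mem_univ k)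
  have haD : (∑ j, a j) ≤ D := Finset.sum_le_sum (fun j _ => by have := hb j; linarith)
  have hbD : (∑ j, b j) ≤ D := Finset.sum_le_sum (fun j _ => by have := ha j; linarith)
  have hSnonneg : 0 ≤ S := Finset.sum_nonneg fun k _ => Real.rpow_nonneg (hc0 k) γ
  -- measurability of tail sets
  have hmsX : ∀ (k : Fin K) (t : ℝ), MeasurableSet {ω | t < X k ω} :=
    fun k t => measurableSet_lt measurable_const (hmeas k)
  have hmsc : ∀ (k : Fin K) (w t : ℝ), MeasurableSet {ω | t < w * X k ω} :=
    fun k w t => measurableSet_lt measurable_const ((hmeas k).const_mul w)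
  -- the a.s. set where all X's are at least 1
  set N : Set Ω := {ω | ¬ ∀ k, 1 ≤ X k ω} with hNdef
  have hN : P N = 0 := by
    have h1 : ∀ k, P {ω | X k ω < 1} = 0 := by
      intro k
      have hsub : {ω | X k ω < 1} ⊆ ⋃ n : ℕ, {ω | (1 - 1/(n+1) : ℝ) < X k ω}ᶜ := by
        intro ω hω
        simp only [Set.mem_setOf_eq] at hω
        obtain ⟨n, hn⟩ := exists_nat_one_div_lt (sub_pos.2 hω)
        refine Set.mem_iUnion.2 ⟨n, ?_⟩
        simp only [Set.mem_compl_iff, Set.mem_setOf_eq, not_lt]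
        linarith
      refine measure_mono_null hsub (measure_iUnion_null fun n => ?_)
      have hx : (1 - 1/(n+1) : ℝ) < 1 := by
        have : (0:ℝ) < 1/(n+1) := by positivity
        linarith
      have hone : P {ω | (1 - 1/(n+1):ℝ) < X k ω} = 1 :=
        (ENNReal.toReal_eq_one_iff _).1 (hlow k _ hx)
      rw [measure_compl (hmsX k _) (measure_ne_top _ _), hone]
      simp
    refine measure_mono_null ?_ (measure_iUnion_null h1)
    intro ω hω
    simp only [hNdef, Set.mem_setOf_eq, not_forall, not_le] at hω
    obtain ⟨k, hk⟩ := hω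
    exact Set.mem_iUnion.2 ⟨k, hk⟩
  -- formula for single weighted tails
  have hsingle : ∀ (k : Fin K) (w s : ℝ), 0 ≤ w → 0 < s → w ≤ s →
      (P {ω | s < w * X k ω}).toReal = w ^ γ * s ^ (-γ) := by
    intro k w s hw hs hws
    rcases eq_or_lt_of_le hw with hw0 | hw0
    · have hempty : {ω | s < w * X k ω} = (∅ : Set Ω) := by
        ext ω
        simp only [Set.mem_setOf_eq, Set.mem_empty_iff_false, iff_false, not_lt, ← hw0]
        simpa using hs.le
      rw [hempty, ← hw0]
      simp [Real.zero_rpow (ne_of_gt hγ)]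
    · have hset : {ω | s < w * X k ω} = {ω | s / w < X k ω} := by
        ext ω
        simp only [Set.mem_setOf_eq]
        rw [div_lt_iff₀ hw0, mul_comm]
      rw [hset, htail k _ ((one_le_div hw0).2 hws), Real.div_rpow hs.le hw,
        Real.rpow_neg hw, div_inv_eq_mul, mul_comm]
  -- formula for pairs
  have hpair : ∀ (j k : Fin K), j ≠ k → ∀ t : ℝ, 1 ≤ t →
      (P ({ω | t < X j ω} ∩ {ω | t < X k ω})).toReal = t ^ (-γ) * t ^ (-γ) := by
    intro j k hjk t ht
    have hind := (hindep.indepFun hjk).measure_inter_preimage_eq_mul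
      (Set.Ioi t) (Set.Ioi t) measurableSet_Ioi measurableSet_Ioi
    have he : (X j ⁻¹' Set.Ioi t) = {ω | t < X j ω} := rfl
    have he' : (X k ⁻¹' Set.Ioi t) = {ω | t < X k ω} := rfl
    rw [he, he'] at hind
    rw [hind, ENNReal.toReal_mul, htail j t ht, htail k t ht]
  -- monotonicity of toReal of measures
  have hπmono : ∀ s t : Set Ω, s ⊆ t → (P s).toReal ≤ (P t).toReal :=
    fun s t h => ENNReal.toReal_mono (measure_ne_top P t) (measure_mono h)
  -- the lower estimate
  have key_lower : ∀ᶠ r in atTop,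
      S ≤ r ^ γ * (P {ω | r < ∑ k, a k * X k ω ∧ r < ∑ k, b k * X k ω}).toReal
            + (K:ℝ)^2 * (D ^ γ)^2 * r ^ (-γ) := by
    filter_upwards [eventually_ge_atTop (max 1 D)] with r hr
    have hr1 : (1:ℝ) ≤ r := le_trans (le_max_left _ _) hr
    have hrD : D ≤ r := le_trans (le_max_right _ _) hr
    have hr0 : (0:ℝ) < r := lt_of_lt_of_le one_pos hr1
    set E : Set Ω := {ω | r < ∑ k, a k * X k ω ∧ r < ∑ k, b k * X k ω} with hEdef
    set Gp : Fin K → Set Ω := fun k => {ω | r < c k * X k ω} with hGpdef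
    -- Bonferroni
    have hbon := bonferroni_aux P Gp (fun k => hmsc k (c k) r) Finset.univ
    -- union is inside E up to null set
    have hUsub : (⋃ k ∈ (Finset.univ : Finset (Fin K)), Gp k) ⊆ E ∪ N := by
      intro ω hω
      obtain ⟨k, -, hk⟩ := Set.mem_iUnion₂.1 hω
      by_cases hωN : ∀ j, 1 ≤ X j ω
      · left
        simp only [hGpdef, Set.mem_setOf_eq] at hk
        have hXk : (0:ℝ) ≤ X k ω := le_trans zero_le_one (hωN k)
        have hak : c k * X k ω ≤ a k * X k ω := mul_le_mul_of_nonneg_right (hca k) hXk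
        have hbk : c k * X k ω ≤ b k * X k ω := mul_le_mul_of_nonneg_right (hcb k) hXk
        have hsa : a k * X k ω ≤ ∑ j, a j * X j ω :=
          Finset.single_le_sum (fun j _ => mul_nonneg (ha j) (le_trans zero_le_one (hωN j)))
            (Finset.mem_univ k)
        have hsb : b k * X k ω ≤ ∑ j, b j * X j ω :=
          Finset.single_le_sum (fun j _ => mul_nonneg (hb j) (le_trans zero_le_one (hωN j)))
            (Finset.mem_univ k)
        exact ⟨by linarith, by linarith⟩
      · right; exact hωN
    have hUle : P (⋃ k ∈ (Finset.univ : Finset (Fin K)), Gp k) ≤ P E := by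
      calc P (⋃ k ∈ (Finset.univ : Finset (Fin K)), Gp k) ≤ P (E ∪ N) := measure_mono hUsub
        _ ≤ P E + P N := measure_union_le _ _
        _ = P E := by rw [hN, add_zero]
    -- pair bound
    have hGsub : ∀ k : Fin K, Gp k ⊆ {ω | r / D < X k ω} := by
      intro k ω hω
      simp only [hGpdef, Set.mem_setOf_eq] at hω ⊢
      rcases eq_or_lt_of_le (hc0 k) with h0 | h0
      · exfalso; rw [← h0] at hω; simp at hω; linarith
      · have h1 : r / c k < X k ω := by rw [div_lt_iff₀ h0, mul_comm]; exact hω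
        have h2 : r / D ≤ r / c k := by
          apply div_le_div_of_nonneg_left hr0.le h0 (hcD k)
        linarith
    have hpairb : ∀ j k : Fin K, j ≠ k →
        (P (Gp j ∩ Gp k)).toReal ≤ (D ^ γ * r ^ (-γ)) * (D ^ γ * r ^ (-γ)) := by
      intro j k hjk
      have h1 : (P (Gp j ∩ Gp k)).toReal ≤ (P ({ω | r/D < X j ω} ∩ {ω | r/D < X k ω})).toReal :=
        hπmono _ _ (Set.inter_subset_inter (hGsub j) (hGsub k))
      have h2 : (1:ℝ) ≤ r / D := (one_le_div hD).2 hrD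
      rw [hpair j k hjk _ h2] at h1
      have h3 : (r / D) ^ (-γ) = D ^ γ * r ^ (-γ) := by
        rw [Real.div_rpow hr0.le hD.le, Real.rpow_neg hD.le, div_inv_eq_mul, mul_comm]
      rw [h3] at h1
      exact h1
    -- convert Bonferroni to reals
    have hfinU : P (⋃ k ∈ (Finset.univ : Finset (Fin K)), Gp k) ≠ ⊤ := measure_ne_top _ _
    have hfinpairs : (∑ j, ∑ k ∈ Finset.univ.erase j, P (Gp j ∩ Gp k)) ≠ ⊤ := by
      refine (ENNReal.sum_lt_top.2 fun j _ => ?_).ne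
      exact (ENNReal.sum_lt_top.2 fun k _ => measure_lt_top _ _)
    have hfinsum : (∑ k, P (Gp k)) ≠ ⊤ := (ENNReal.sum_lt_top.2 fun k _ => measure_lt_top _ _).ne
    have hreal := (ENNReal.toReal_le_toReal hfinsum (by
      rw [← lt_top_iff_ne_top] at hfinU hfinpairs ⊢
      exact ENNReal.add_lt_top.2 ⟨hfinU, hfinpairs⟩)).2 hbon
    rw [ENNReal.toReal_add hfinU hfinpairs,
      ENNReal.toReal_sum (fun k _ => measure_ne_top _ _),
      ENNReal.toReal_sum (fun j _ => by
        exact (ENNReal.sum_lt_top.2 fun k _ => measure_lt_top _ _).ne)] at hreal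
    have hreal2 : ∑ k, (P (Gp k)).toReal ≤ (P E).toReal
        + ∑ j, ∑ k ∈ Finset.univ.erase j, (P (Gp j ∩ Gp k)).toReal := by
      have hU2 : (P (⋃ k ∈ (Finset.univ : Finset (Fin K)), Gp k)).toReal ≤ (P E).toReal :=
        ENNReal.toReal_mono (measure_ne_top _ _) hUle
      calc ∑ k, (P (Gp k)).toReal
          ≤ (P (⋃ k ∈ (Finset.univ : Finset (Fin K)), Gp k)).toReal
            + ∑ j, (∑ k ∈ Finset.univ.erase j, P (Gp j ∩ Gp k)).toReal := hreal
        _ = (P (⋃ k ∈ (Finset.univ : Finset (Fin K)), Gp k)).toReal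
            + ∑ j, ∑ k ∈ Finset.univ.erase j, (P (Gp j ∩ Gp k)).toReal := by
            congr 1
            exact Finset.sum_congr rfl fun j _ =>
              ENNReal.toReal_sum (fun k _ => measure_ne_top _ _)
        _ ≤ _ := add_le_add_left hU2 _
    -- compute the single terms
    have hsingles : ∑ k, (P (Gp k)).toReal = S * r ^ (-γ) := by
      rw [hSdef, Finset.sum_mul]
      refine Finset.sum_congr rfl fun k _ => ?_
      exact hsingle k (c k) r (hc0 k) hr0 (le_trans (hcD k) hrD)
    -- bound the pair sum
    have hpairsum : ∑ j, ∑ k ∈ Finset.univ.erase j, (P (Gp j ∩ Gp k)).toReal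
        ≤ (K:ℝ)^2 * ((D ^ γ * r ^ (-γ)) * (D ^ γ * r ^ (-γ))) := by
      have hterm : (0:ℝ) ≤ (D ^ γ * r ^ (-γ)) * (D ^ γ * r ^ (-γ)) := by positivity
      calc ∑ j, ∑ k ∈ Finset.univ.erase j, (P (Gp j ∩ Gp k)).toReal
          ≤ ∑ j : Fin K, ∑ k ∈ Finset.univ.erase j,
              ((D ^ γ * r ^ (-γ)) * (D ^ γ * r ^ (-γ))) :=
            Finset.sum_le_sum fun j _ => Finset.sum_le_sum fun k hk =>
              hpairb j k (Finset.ne_of_mem_erase hk).symm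
        _ ≤ ∑ j : Fin K, ∑ k : Fin K, ((D ^ γ * r ^ (-γ)) * (D ^ γ * r ^ (-γ))) :=
            Finset.sum_le_sum fun j _ =>
              Finset.sum_le_sum_of_subset_of_nonneg (Finset.subset_univ _)
                (fun _ _ _ => hterm)
        _ = (K:ℝ)^2 * ((D ^ γ * r ^ (-γ)) * (D ^ γ * r ^ (-γ))) := by
            simp [Finset.sum_const, Finset.card_univ]; ring
    have hid1 : r ^ γ * r ^ (-γ) = 1 := by
      rw [← Real.rpow_add hr0]; simp
    have hchain : S * r ^ (-γ) ≤ (P E).toReal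
        + (K:ℝ)^2 * ((D ^ γ * r ^ (-γ)) * (D ^ γ * r ^ (-γ))) := by
      rw [← hsingles]
      exact le_trans hreal2 (add_le_add_right hpairsum _)
    have hmul := mul_le_mul_of_nonneg_left hchain (Real.rpow_nonneg hr0.le γ)
    calc S = (r ^ γ * r ^ (-γ)) * S := by rw [hid1]; ring
      _ = r ^ γ * (S * r ^ (-γ)) := by ring
      _ ≤ r ^ γ * ((P E).toReal
            + (K:ℝ)^2 * ((D ^ γ * r ^ (-γ)) * (D ^ γ * r ^ (-γ)))) := hmul
      _ = r ^ γ * (P E).toReal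
            + (r ^ γ * r ^ (-γ)) * ((K:ℝ)^2 * (D ^ γ)^2 * r ^ (-γ)) := by ring
      _ = r ^ γ * (P E).toReal + (K:ℝ)^2 * (D ^ γ)^2 * r ^ (-γ) := by rw [hid1]; ring
  -- now the final limit argument
  rw [tendsto_order]
  constructor
  · intro y hy
    have hgz : Tendsto (fun r : ℝ => (K:ℝ)^2 * (D ^ γ)^2 * r ^ (-γ)) atTop (nhds 0) := by
      have h := (tendsto_rpow_neg_atTop hγ).const_mul ((K:ℝ)^2 * (D ^ γ)^2)
      simpa using h
    filter_upwards [key_lower, hgz.eventually_lt_const (show (0:ℝ) < S - y by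
      simp only [hSdef]; linarith)] with r h1 h2
    linarith
  · intro y hy
    -- pick u close to 1 from below
    have hcont : Tendsto (fun u : ℝ => u ^ (-γ) * S) (nhdsWithin 1 (Set.Iio 1)) (nhds S) := by
      have h0 : ContinuousAt (fun u : ℝ => u ^ (-γ) * S) 1 :=
        (Real.continuousAt_rpow_const 1 (-γ) (Or.inl one_ne_zero)).mul continuousAt_const
      have h := h0.tendsto.mono_left
        (nhdsWithin_le_nhds : nhdsWithin (1:ℝ) (Set.Iio 1) ≤ nhds 1)
      simpa [Real.one_rpow] using h
    have hev1 : ∀ᶠ u in nhdsWithin (1:ℝ) (Set.Iio 1), u ^ (-γ) * S < y :=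
      hcont.eventually_lt_const (by simpa [hSdef] using hy)
    have hev2 : ∀ᶠ u in nhdsWithin (1:ℝ) (Set.Iio 1), 0 < u :=
      (eventually_gt_nhds one_pos).filter_mono nhdsWithin_le_nhds
    obtain ⟨u, hyu, hu0, hu1mem⟩ := (hev1.and (hev2.and eventually_mem_nhdsWithin)).exists
    have hu1 : u < 1 := hu1mem
    set ε : ℝ := (1 - u) / D with hεdef
    have hε : 0 < ε := div_pos (by linarith) hD
    have key_upper : ∀ᶠ r in atTop,
        r ^ γ * (P {ω | r < ∑ k, a k * X k ω ∧ r < ∑ k, b k * X k ω}).toReal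
          ≤ u ^ (-γ) * S + (K:ℝ)^2 * (ε ^ (-γ))^2 * r ^ (-γ) := by
      filter_upwards [eventually_ge_atTop (max (1/ε) (D/u))] with r hr
      have hrε : 1/ε ≤ r := le_trans (le_max_left _ _) hr
      have hru : D/u ≤ r := le_trans (le_max_right _ _) hr
      have hr0 : (0:ℝ) < r := lt_of_lt_of_le (by positivity) hrε
      have hεr1 : (1:ℝ) ≤ ε * r := by
        have := (div_le_iff₀ hε).1 hrε
        linarith [this]
      have hDur : D ≤ u * r := by
        have := (div_le_iff₀ hu0).1 hru
        linarith [this]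
      have hur0 : 0 < u * r := mul_pos hu0 hr0
      have hεr0 : 0 < ε * r := mul_pos hε hr0
      set E : Set Ω := {ω | r < ∑ k, a k * X k ω ∧ r < ∑ k, b k * X k ω} with hEdef
      set G : Fin K → Set Ω := fun k => {ω | u * r < c k * X k ω} with hGdef
      set B : Fin K → Fin K → Set Ω :=
        fun j k => {ω | ε * r < X j ω} ∩ {ω | ε * r < X k ω} with hBdef
      set Bad : Set Ω := ⋃ j ∈ (Finset.univ : Finset (Fin K)),
        ⋃ k ∈ Finset.univ.erase j, B j k with hBaddef
      -- the inclusion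
      have hincl : E ⊆ (⋃ k ∈ (Finset.univ : Finset (Fin K)), G k) ∪ (Bad ∪ N) := by
        intro ω hω
        by_cases hωN : ∀ j, 1 ≤ X j ω
        swap
        · right; right; exact hωN
        obtain ⟨hA, hB'⟩ := hω
        by_cases hbig : ∃ p q : Fin K, p ≠ q ∧ ε * r < X p ω ∧ ε * r < X q ω
        · right; left
          obtain ⟨p, q, hpq, h1, h2⟩ := hbig
          refine Set.mem_biUnion (Finset.mem_univ p) ?_
          exact Set.mem_biUnion (Finset.mem_erase.2 ⟨hpq.symm, Finset.mem_univ q⟩) ⟨h1, h2⟩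
        · left
          push_neg at hbig
          have hsum_bound : ∀ (v : Fin K → ℝ), (∀ j, 0 ≤ v j) → (∑ j, v j) ≤ D →
              ∀ k0 : Fin K, (∀ j, j ≠ k0 → X j ω ≤ ε * r) →
              ∑ j, v j * X j ω ≤ v k0 * X k0 ω + (1 - u) * r := by
            intro v hv hvD k0 hsmall
            have h1 : ∑ j ∈ Finset.univ.erase k0, v j * X j ω
                ≤ ∑ j ∈ Finset.univ.erase k0, v j * (ε * r) :=
              Finset.sum_le_sum fun j hj =>
                mul_le_mul_of_nonneg_left (hsmall j (Finset.ne_of_mem_erase hj)) (hv j)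
            have h2 : ∑ j ∈ Finset.univ.erase k0, v j * (ε * r) ≤ D * (ε * r) := by
              rw [← Finset.sum_mul]
              refine mul_le_mul_of_nonneg_right ?_ hεr0.le
              calc ∑ j ∈ Finset.univ.erase k0, v j ≤ ∑ j, v j :=
                    Finset.sum_le_sum_of_subset_of_nonneg (Finset.subset_univ _)
                      (fun i _ _ => hv i)
                _ ≤ D := hvD
            have h3 : D * (ε * r) = (1 - u) * r := by
              rw [hεdef]; field_simp
            have hsplit : ∑ j, v j * X j ω
                = v k0 * X k0 ω + ∑ j ∈ Finset.univ.erase k0, v j * X j ω :=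
              (Finset.add_sum_erase _ _ (Finset.mem_univ k0)).symm
            linarith
          by_cases hbig1 : ∃ k0, ε * r < X k0 ω
          · obtain ⟨k0, hk0⟩ := hbig1
            have hsmall : ∀ j, j ≠ k0 → X j ω ≤ ε * r :=
              fun j hj => hbig k0 j (Ne.symm hj) hk0
            have hsa := hsum_bound a ha haD k0 hsmall
            have hsb := hsum_bound b hb hbD k0 hsmall
            have haX : u * r < a k0 * X k0 ω := by linarith
            have hbX : u * r < b k0 * X k0 ω := by linarith
            have hcX : u * r < c k0 * X k0 ω := by
              rcases le_total (a k0) (b k0) with h | h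
              · have : c k0 = a k0 := min_eq_left h
                rw [this]; exact haX
              · have : c k0 = b k0 := min_eq_right h
                rw [this]; exact hbX
            exact Set.mem_biUnion (Finset.mem_univ k0) hcX
          · exfalso
            push_neg at hbig1
            have hsum_a : ∑ j, a j * X j ω ≤ D * (ε * r) := by
              calc ∑ j, a j * X j ω ≤ ∑ j, a j * (ε * r) :=
                    Finset.sum_le_sum fun j _ =>
                      mul_le_mul_of_nonneg_left (hbig1 j) (ha j)
                _ = (∑ j, a j) * (ε * r) := by rw [Finset.sum_mul]
                _ ≤ D * (ε * r) := mul_le_mul_of_nonneg_right haD hεr0.le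
            have h3 : D * (ε * r) = (1 - u) * r := by
              rw [hεdef]; field_simp
            nlinarith
      -- measure chain
      have hmeasB : P E ≤ ∑ k, P (G k) + ∑ j, ∑ k ∈ Finset.univ.erase j, P (B j k) := by
        calc P E ≤ P ((⋃ k ∈ (Finset.univ : Finset (Fin K)), G k) ∪ (Bad ∪ N)) :=
              measure_mono hincl
          _ ≤ P (⋃ k ∈ (Finset.univ : Finset (Fin K)), G k) + P (Bad ∪ N) :=
              measure_union_le _ _
          _ ≤ P (⋃ k ∈ (Finset.univ : Finset (Fin K)), G k) + (P Bad + P N) :=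
              add_le_add_right (measure_union_le _ _) _
          _ = P (⋃ k ∈ (Finset.univ : Finset (Fin K)), G k) + P Bad := by
              rw [hN, add_zero]
          _ ≤ ∑ k, P (G k) + ∑ j, ∑ k ∈ Finset.univ.erase j, P (B j k) := by
              refine add_le_add (measure_biUnion_finset_le _ _) ?_
              calc P Bad ≤ ∑ j, P (⋃ k ∈ Finset.univ.erase j, B j k) :=
                    measure_biUnion_finset_le _ _
                _ ≤ ∑ j, ∑ k ∈ Finset.univ.erase j, P (B j k) :=
                    Finset.sum_le_sum fun j _ => measure_biUnion_finset_le _ _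
      have hfin1 : (∑ k, P (G k)) ≠ ⊤ := (ENNReal.sum_lt_top.2 fun k _ => measure_lt_top _ _).ne
      have hfin2 : (∑ j, ∑ k ∈ Finset.univ.erase j, P (B j k)) ≠ ⊤ := by
        refine (ENNReal.sum_lt_top.2 fun j _ => ?_).ne
        exact ENNReal.sum_lt_top.2 fun k _ => measure_lt_top _ _
      have hrealB := (ENNReal.toReal_le_toReal (measure_ne_top _ _) (by
        rw [← lt_top_iff_ne_top] at hfin1 hfin2 ⊢
        exact ENNReal.add_lt_top.2 ⟨hfin1, hfin2⟩)).2 hmeasB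
      rw [ENNReal.toReal_add hfin1 hfin2,
        ENNReal.toReal_sum (fun k _ => measure_ne_top _ _),
        ENNReal.toReal_sum (fun j _ => by
          exact (ENNReal.sum_lt_top.2 fun k _ => measure_lt_top _ _).ne)] at hrealB
      have hsingles : ∑ k, (P (G k)).toReal = S * (u * r) ^ (-γ) := by
        rw [hSdef, Finset.sum_mul]
        refine Finset.sum_congr rfl fun k _ => ?_
        exact hsingle k (c k) (u * r) (hc0 k) hur0 (le_trans (hcD k) hDur)
      have hpairsum : ∑ j, ∑ k ∈ Finset.univ.erase j, (P (B j k)).toReal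
          ≤ (K:ℝ)^2 * ((ε * r) ^ (-γ) * (ε * r) ^ (-γ)) := by
        have hterm : (0:ℝ) ≤ (ε * r) ^ (-γ) * (ε * r) ^ (-γ) := by positivity
        calc ∑ j, ∑ k ∈ Finset.univ.erase j, (P (B j k)).toReal
            ≤ ∑ j : Fin K, ∑ k ∈ Finset.univ.erase j, ((ε * r) ^ (-γ) * (ε * r) ^ (-γ)) := by
              refine Finset.sum_le_sum fun j _ => Finset.sum_le_sum fun k hk => ?_
              rw [hpair j k (Finset.ne_of_mem_erase hk).symm _ hεr1]
          _ ≤ ∑ j : Fin K, ∑ k : Fin K, ((ε * r) ^ (-γ) * (ε * r) ^ (-γ)) :=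
              Finset.sum_le_sum fun j _ =>
                Finset.sum_le_sum_of_subset_of_nonneg (Finset.subset_univ _)
                  (fun _ _ _ => hterm)
          _ = (K:ℝ)^2 * ((ε * r) ^ (-γ) * (ε * r) ^ (-γ)) := by
              simp [Finset.sum_const, Finset.card_univ]; ring
      have hid1 : r ^ γ * r ^ (-γ) = 1 := by
        rw [← Real.rpow_add hr0]; simp
      have hmulε : (ε * r) ^ (-γ) = ε ^ (-γ) * r ^ (-γ) := Real.mul_rpow hε.le hr0.le
      have hmulu : (u * r) ^ (-γ) = u ^ (-γ) * r ^ (-γ) := Real.mul_rpow hu0.le hr0.le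
      have hrealB2 : (P E).toReal ≤ ∑ k, (P (G k)).toReal
          + ∑ j, ∑ k ∈ Finset.univ.erase j, (P (B j k)).toReal := by
        refine le_trans hrealB (le_of_eq ?_)
        congr 1
        exact Finset.sum_congr rfl fun j _ =>
          ENNReal.toReal_sum (fun k _ => measure_ne_top _ _)
      have hchain : (P E).toReal ≤ S * (u ^ (-γ) * r ^ (-γ))
          + (K:ℝ)^2 * ((ε ^ (-γ) * r ^ (-γ)) * (ε ^ (-γ) * r ^ (-γ))) := by
        rw [← hmulε, ← hmulu, ← hsingles]
        exact le_trans hrealB2 (add_le_add_right hpairsum _)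
      have hmul := mul_le_mul_of_nonneg_left hchain (Real.rpow_nonneg hr0.le γ)
      calc r ^ γ * (P E).toReal
          ≤ r ^ γ * (S * (u ^ (-γ) * r ^ (-γ))
              + (K:ℝ)^2 * ((ε ^ (-γ) * r ^ (-γ)) * (ε ^ (-γ) * r ^ (-γ)))) := hmul
        _ = (r ^ γ * r ^ (-γ)) * (u ^ (-γ) * S)
              + (r ^ γ * r ^ (-γ)) * ((K:ℝ)^2 * (ε ^ (-γ))^2 * r ^ (-γ)) := by ring
        _ = u ^ (-γ) * S + (K:ℝ)^2 * (ε ^ (-γ))^2 * r ^ (-γ) := by rw [hid1]; ring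
    have hgz : Tendsto (fun r : ℝ => (K:ℝ)^2 * (ε ^ (-γ))^2 * r ^ (-γ)) atTop (nhds 0) := by
      have h := (tendsto_rpow_neg_atTop hγ).const_mul ((K:ℝ)^2 * (ε ^ (-γ))^2)
      simpa using h
    filter_upwards [key_upper, hgz.eventually_lt_const
      (show (0:ℝ) < y - u ^ (-γ) * S by linarith)] with r h1 h2
    have : r ^ γ * (P {ω | r < ∑ k, a k * X k ω ∧ r < ∑ k, b k * X k ω}).toReal < y := by
      linarith
    simpa [hSdef] using this
end

section
/- Let X_1, …, X_K be independent Pareto(γ) random variables, γ > 0, and let B_{1,1}, …, B_{1,K} ≥ 0 and B_{2,1}, …, B_{2,K} ≥ 0 satisfy Σ_{k=1}^K B_{1,k} = Σ_{k=1}^K B_{2,k} = 1. Define R_1 = Σ_{k=1}^K B_{1,k}^{1/γ} X_k and R_2 = Σ_{k=1}^K B_{2,k}^{1/γ} X_k. Then the tail-correlation coefficient of (R_1, R_2) satisfies lim_{r→∞} P(R_1 > r and R_2 > r) / P(R_2 > r) = Σ_{k=1}^K min(B_{1,k}, B_{2,k}). -/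
open MeasureTheory ProbabilityTheory Filter Finset Set

section aux
variable {Ω : Type*} [MeasurableSpace Ω] {P : Measure Ω} [IsProbabilityMeasure P]

lemma prob_toReal_compl {s : Set Ω} (hs : MeasurableSet s) :
    (P sᶜ).toReal = 1 - (P s).toReal := by
  rw [measure_compl hs (measure_ne_top _ _),
    ENNReal.toReal_sub_of_le (measure_mono (subset_univ _)) (measure_ne_top _ _),
    measure_univ, ENNReal.toReal_one]

lemma prob_toReal_mono {s t : Set Ω} (h : s ⊆ t) : (P s).toReal ≤ (P t).toReal :=
  ENNReal.toReal_mono (measure_ne_top _ _) (measure_mono h)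

lemma prob_toReal_union_le (s t : Set Ω) :
    (P (s ∪ t)).toReal ≤ (P s).toReal + (P t).toReal := by
  refine le_trans (ENNReal.toReal_mono ?_ (measure_union_le s t)) ?_
  · exact ENNReal.add_ne_top.2 ⟨measure_ne_top _ _, measure_ne_top _ _⟩
  · rw [ENNReal.toReal_add (measure_ne_top _ _) (measure_ne_top _ _)]

lemma prob_toReal_iUnion_le {K : ℕ} (f : Fin K → Set Ω) :
    (P (⋃ k, f k)).toReal ≤ ∑ k, (P (f k)).toReal := by
  refine le_trans (ENNReal.toReal_mono ?_ (measure_iUnion_fintype_le _ _)) ?_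
  · exact ENNReal.sum_ne_top.2 fun k _ => measure_ne_top _ _
  · rw [ENNReal.toReal_sum (fun k _ => measure_ne_top _ _)]

lemma prob_toReal_biUnion_le {K : ℕ} (s : Finset (Fin K)) (f : Fin K → Set Ω) :
    (P (⋃ k ∈ s, f k)).toReal ≤ ∑ k ∈ s, (P (f k)).toReal := by
  refine le_trans (ENNReal.toReal_mono ?_ (measure_biUnion_finset_le _ _)) ?_
  · exact ENNReal.sum_ne_top.2 fun k _ => measure_ne_top _ _
  · rw [ENNReal.toReal_sum (fun k _ => measure_ne_top _ _)]

lemma pareto_ae_one {X : Ω → ℝ} (hX : Measurable X)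
    (hlow : ∀ x : ℝ, x < 1 → (P {ω | x < X ω}).toReal = 1) :
    P {ω | X ω < 1} = 0 := by
  have h1 : ∀ x : ℝ, x < 1 → P {ω | x < X ω} = 1 := by
    intro x hx
    have h := hlow x hx
    have hne : P {ω | x < X ω} ≠ ⊤ := measure_ne_top _ _
    rw [← ENNReal.ofReal_toReal hne, h]; simp
  have hsub : {ω | X ω < 1} ⊆ ⋃ n : ℕ, {ω | (1 - 1/(n+1) : ℝ) < X ω}ᶜ := by
    intro ω hω
    obtain ⟨n, hn⟩ := exists_nat_one_div_lt (by simpa using hω : (0:ℝ) < 1 - X ω)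
    refine Set.mem_iUnion.2 ⟨n, ?_⟩
    simp only [Set.mem_compl_iff, Set.mem_setOf_eq, not_lt]
    have : (1:ℝ)/(n+1) < 1 - X ω := by exact_mod_cast hn
    linarith
  refine measure_mono_null hsub (measure_iUnion_null fun n => ?_)
  have hx : (1 - 1/((n:ℝ)+1) : ℝ) < 1 := by
    have : (0:ℝ) < 1/((n:ℝ)+1) := by positivity
    linarith
  rw [measure_compl (measurableSet_lt measurable_const hX) (measure_ne_top _ _), h1 _ hx,
    measure_univ, tsub_self]

lemma pareto_scaled_tail {X : Ω → ℝ} {γ : ℝ} (hγ : 0 < γ)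
    (htail : ∀ x : ℝ, 1 ≤ x → (P {ω | x < X ω}).toReal = x ^ (-γ))
    {c r : ℝ} (hc0 : 0 ≤ c) (hc1 : c ≤ 1) (hr : 1 ≤ r) :
    (P {ω | r < c * X ω}).toReal = c ^ γ * r ^ (-γ) := by
  rcases eq_or_lt_of_le hc0 with h0 | h0
  · have he : {ω | r < c * X ω} = ∅ := by
      ext ω; simp only [Set.mem_setOf_eq, Set.mem_empty_iff_false, iff_false, not_lt, ← h0,
        zero_mul]
      linarith
    rw [he, ← h0, Real.zero_rpow hγ.ne']
    simp
  · have hset : {ω | r < c * X ω} = {ω | r / c < X ω} := by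
      ext ω; simp only [Set.mem_setOf_eq, div_lt_iff₀ h0, mul_comm]
    have hrc : (1:ℝ) ≤ r / c := by
      rw [le_div_iff₀ h0]; nlinarith
    rw [hset, htail _ hrc, Real.div_rpow (by linarith) hc0, Real.rpow_neg hc0]
    field_simp

end aux

lemma lower_limit {K : ℕ} (a : Fin K → ℝ) {γ : ℝ} (hγ : 0 < γ) :
    Tendsto (fun r : ℝ => r ^ γ * (1 - ∏ k, (1 - a k * r ^ (-γ)))) atTop (nhds (∑ k, a k)) := by
  set g : ℝ → ℝ := fun t => 1 - ∏ k, (1 - a k * t) with hg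
  have hder : HasDerivAt g (∑ k, a k) 0 := by
    have hfac : ∀ k : Fin K, HasDerivAt (fun t : ℝ => 1 - a k * t) (-(a k)) 0 := by
      intro k
      simpa using ((hasDerivAt_id (0:ℝ)).const_mul (a k)).const_sub 1
    have hprod := HasDerivAt.fun_finsetProd (u := Finset.univ) (fun k _ => hfac k)
    have h2 : HasDerivAt g _ 0 := hprod.const_sub 1
    convert h2 using 1
    simp [smul_eq_mul]
  have hslope : Tendsto (slope g 0) (nhdsWithin 0 {(0:ℝ)}ᶜ) (nhds (∑ k, a k)) :=
    hasDerivAt_iff_tendsto_slope.mp hder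
  have htr : Tendsto (fun r : ℝ => r ^ (-γ)) atTop (nhdsWithin 0 {(0:ℝ)}ᶜ) := by
    rw [tendsto_nhdsWithin_iff]
    constructor
    · exact tendsto_rpow_neg_atTop hγ
    · filter_upwards [eventually_gt_atTop (0:ℝ)] with r hr
      exact (Real.rpow_pos_of_pos hr _).ne'
  have hcomp := hslope.comp htr
  refine hcomp.congr' ?_
  filter_upwards [eventually_gt_atTop (0:ℝ)] with r hr
  have h0 : g 0 = 0 := by simp [hg]
  simp only [Function.comp_apply, slope_def_field, h0, sub_zero]
  rw [div_eq_mul_inv, ← Real.rpow_neg hr.le, neg_neg, mul_comm]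

theorem joint_tail
    {Ω : Type*} [MeasurableSpace Ω] (P : Measure Ω) [IsProbabilityMeasure P]
    (K : ℕ) (γ : ℝ) (hγ : 0 < γ) (X : Fin K → Ω → ℝ)
    (hmeas : ∀ k, Measurable (X k))
    (hindep : iIndepFun X P)
    (htail : ∀ k, ∀ x : ℝ, 1 ≤ x → (P {ω | x < X k ω}).toReal = x ^ (-γ))
    (hlow : ∀ k, ∀ x : ℝ, x < 1 → (P {ω | x < X k ω}).toReal = 1)
    (B₁ B₂ : Fin K → ℝ) (hB₁ : ∀ k, 0 ≤ B₁ k) (hB₂ : ∀ k, 0 ≤ B₂ k)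
    (hB₁sum : ∑ k, B₁ k = 1) (hB₂sum : ∑ k, B₂ k = 1)
    (R₁ R₂ : Ω → ℝ)
    (hR₁ : ∀ ω, R₁ ω = ∑ k, (B₁ k) ^ (1 / γ) * X k ω)
    (hR₂ : ∀ ω, R₂ ω = ∑ k, (B₂ k) ^ (1 / γ) * X k ω) :
    Tendsto (fun r : ℝ => r ^ γ * (P {ω | r < R₁ ω ∧ r < R₂ ω}).toReal) atTop
      (nhds (∑ k, min (B₁ k) (B₂ k))) := by
  classical
  set c₁ : Fin K → ℝ := fun k => (B₁ k) ^ (1/γ) with hc₁def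
  set c₂ : Fin K → ℝ := fun k => (B₂ k) ^ (1/γ) with hc₂def
  set d : Fin K → ℝ := fun k => min (c₁ k) (c₂ k) with hddef
  set S : ℝ := ∑ k, min (B₁ k) (B₂ k) with hSdef
  have hB₁le : ∀ k, B₁ k ≤ 1 := fun k =>
    hB₁sum ▸ Finset.single_le_sum (fun i _ => hB₁ i) (Finset.mem_univ k)
  have hB₂le : ∀ k, B₂ k ≤ 1 := fun k =>
    hB₂sum ▸ Finset.single_le_sum (fun i _ => hB₂ i) (Finset.mem_univ k)
  have hmin0 : ∀ k, 0 ≤ min (B₁ k) (B₂ k) := fun k => le_min (hB₁ k) (hB₂ k)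
  have hS0 : 0 ≤ S := Finset.sum_nonneg fun k _ => hmin0 k
  have hc₁0 : ∀ k, 0 ≤ c₁ k := fun k => Real.rpow_nonneg (hB₁ k) _
  have hc₂0 : ∀ k, 0 ≤ c₂ k := fun k => Real.rpow_nonneg (hB₂ k) _
  have hc₁1 : ∀ k, c₁ k ≤ 1 := fun k => Real.rpow_le_one (hB₁ k) (hB₁le k) (by positivity)
  have hc₂1 : ∀ k, c₂ k ≤ 1 := fun k => Real.rpow_le_one (hB₂ k) (hB₂le k) (by positivity)
  have hpow : ∀ x : ℝ, 0 ≤ x → (x ^ (1/γ)) ^ γ = x := fun x hx => by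
    rw [← Real.rpow_mul hx, one_div_mul_cancel hγ.ne', Real.rpow_one]
  have hc₁γ : ∀ k, (c₁ k) ^ γ = B₁ k := fun k => hpow _ (hB₁ k)
  have hc₂γ : ∀ k, (c₂ k) ^ γ = B₂ k := fun k => hpow _ (hB₂ k)
  have hd0 : ∀ k, 0 ≤ d k := fun k => le_min (hc₁0 k) (hc₂0 k)
  have hd1 : ∀ k, d k ≤ 1 := fun k => min_le_of_left_le (hc₁1 k)
  have hdγ : ∀ k, (d k) ^ γ = min (B₁ k) (B₂ k) := by
    intro k
    rcases le_total (c₁ k) (c₂ k) with h | h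
    · have hB : B₁ k ≤ B₂ k := by
        rw [← hc₁γ k, ← hc₂γ k]; exact Real.rpow_le_rpow (hc₁0 k) h hγ.le
      rw [hddef]; simp only [min_eq_left h, hc₁γ, min_eq_left hB]
    · have hB : B₂ k ≤ B₁ k := by
        rw [← hc₁γ k, ← hc₂γ k]; exact Real.rpow_le_rpow (hc₂0 k) h hγ.le
      rw [hddef]; simp only [min_eq_right h, hc₂γ, min_eq_right hB]
  set G : Set Ω := {ω | ∀ k, 1 ≤ X k ω} with hGdef
  have hGc : P Gᶜ = 0 := by
    have hsub : Gᶜ ⊆ ⋃ k, {ω | X k ω < 1} := by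
      intro ω hω
      simp only [hGdef, Set.mem_compl_iff, Set.mem_setOf_eq, not_forall, not_le] at hω
      obtain ⟨k, hk⟩ := hω
      exact Set.mem_iUnion.2 ⟨k, hk⟩
    exact measure_mono_null hsub
      (measure_iUnion_null fun k => pareto_ae_one (hmeas k) (hlow k))
  have hEm : ∀ (k : Fin K) (c a : ℝ), MeasurableSet {ω | a < c * X k ω} :=
    fun k c a => measurableSet_lt measurable_const ((hmeas k).const_mul c)
  -- Part LB
  have hLB : ∀ r : ℝ, 1 ≤ r →
      1 - ∏ k, (1 - min (B₁ k) (B₂ k) * r ^ (-γ)) ≤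
        (P {ω | r < R₁ ω ∧ r < R₂ ω}).toReal := by
    intro r hr
    have hsub : (⋃ k, {ω | r < d k * X k ω}) ∩ G ⊆ {ω | r < R₁ ω ∧ r < R₂ ω} := by
      rintro ω ⟨hu, hg⟩
      obtain ⟨k, hk⟩ := Set.mem_iUnion.1 hu
      simp only [Set.mem_setOf_eq] at hk ⊢
      have hX1 : ∀ j, (1:ℝ) ≤ X j ω := hg
      constructor
      · rw [hR₁]
        calc r < d k * X k ω := hk
          _ ≤ c₁ k * X k ω :=
            mul_le_mul_of_nonneg_right (min_le_left _ _) (by linarith [hX1 k])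
          _ ≤ ∑ j, c₁ j * X j ω :=
            Finset.single_le_sum (f := fun j => c₁ j * X j ω)
              (fun j _ => mul_nonneg (hc₁0 j) (by linarith [hX1 j])) (Finset.mem_univ k)
      · rw [hR₂]
        calc r < d k * X k ω := hk
          _ ≤ c₂ k * X k ω :=
            mul_le_mul_of_nonneg_right (min_le_right _ _) (by linarith [hX1 k])
          _ ≤ ∑ j, c₂ j * X j ω :=
            Finset.single_le_sum (f := fun j => c₂ j * X j ω)
              (fun j _ => mul_nonneg (hc₂0 j) (by linarith [hX1 j])) (Finset.mem_univ k)
    have hprod : P (⋂ k, {ω | r < d k * X k ω}ᶜ) = ∏ k, P ({ω | r < d k * X k ω}ᶜ) := by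
      refine hindep.meas_iInter fun k => ?_
      refine ⟨{y | r < d k * y}ᶜ,
        (measurableSet_lt measurable_const (measurable_id.const_mul _)).compl, ?_⟩
      rfl
    have hterm : ∀ k, (P ({ω | r < d k * X k ω}ᶜ)).toReal
        = 1 - min (B₁ k) (B₂ k) * r ^ (-γ) := by
      intro k
      rw [prob_toReal_compl (hEm k _ _),
        pareto_scaled_tail hγ (htail k) (hd0 k) (hd1 k) hr, hdγ]
    have hU : (P (⋃ k, {ω | r < d k * X k ω})).toReal
        = 1 - ∏ k, (1 - min (B₁ k) (B₂ k) * r ^ (-γ)) := by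
      have hcompl := prob_toReal_compl (P := P)
        (MeasurableSet.iUnion fun k => hEm k (d k) r)
      rw [Set.compl_iUnion, hprod, ENNReal.toReal_prod] at hcompl
      rw [Finset.prod_congr rfl (fun k _ => hterm k)] at hcompl
      linarith
    calc 1 - ∏ k, (1 - min (B₁ k) (B₂ k) * r ^ (-γ))
        = (P (⋃ k, {ω | r < d k * X k ω})).toReal := hU.symm
      _ = (P ((⋃ k, {ω | r < d k * X k ω}) ∩ G)).toReal := by
          rw [measure_inter_conull hGc]
      _ ≤ _ := prob_toReal_mono hsub
  -- Part UB
  have hUB : ∀ ε : ℝ, 0 < ε → ε < 1 → ∃ C : ℝ, 0 ≤ C ∧ ∀ᶠ r in atTop,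
      (P {ω | r < R₁ ω ∧ r < R₂ ω}).toReal
        ≤ (1-ε) ^ (-γ) * S * r ^ (-γ) + C * (r ^ (-γ) * r ^ (-γ)) := by
    intro ε hε0 hε1
    have hK : 0 < K := by
      rcases Nat.eq_zero_or_pos K with h | h
      · subst h; simp at hB₁sum
      · exact h
    have hKR : (0:ℝ) < K := by exact_mod_cast hK
    set c0 : ℝ := (ε / K) ^ (-γ) with hc0def
    have hc0pos : 0 < c0 := Real.rpow_pos_of_pos (by positivity) _
    have h1ε : (0:ℝ) < 1 - ε := by linarith
    have haux : 0 < (1-ε) ^ (-γ) := Real.rpow_pos_of_pos h1ε _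
    refine ⟨(1-ε) ^ (-γ) * c0 + c0 * c0, by positivity, ?_⟩
    filter_upwards [eventually_ge_atTop (1:ℝ), eventually_ge_atTop (1/(1-ε)),
        eventually_ge_atTop ((K:ℝ)/ε)] with r hr1 hr2 hr3
    have hr0 : (0:ℝ) < r := lt_of_lt_of_le one_pos hr1
    set a : ℝ := (1-ε) * r with hadef
    set m : ℝ := (ε / K) * r with hmdef
    have ha1 : 1 ≤ a := by
      rw [div_le_iff₀ h1ε] at hr2
      rw [hadef]; linarith
    have hm1 : 1 ≤ m := by
      rw [div_le_iff₀ hε0] at hr3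
      rw [hmdef, div_mul_eq_mul_div, le_div_iff₀ hKR]
      linarith
    have hm0 : (0:ℝ) ≤ m := by linarith
    have haγ : a ^ (-γ) = (1-ε) ^ (-γ) * r ^ (-γ) := Real.mul_rpow h1ε.le hr0.le
    have hmγ : m ^ (-γ) = c0 * r ^ (-γ) := by
      rw [hmdef, Real.mul_rpow (by positivity) hr0.le, hc0def]
    have hsumm : ∑ _k : Fin K, m = ε * r := by
      rw [Finset.sum_const, Finset.card_univ, Fintype.card_fin, nsmul_eq_mul, hmdef]
      field_simp
    -- pointwise inclusion 1
    have hincl1 : {ω | r < R₁ ω ∧ r < R₂ ω} ⊆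
        (⋃ k, ({ω | a < c₁ k * X k ω} ∩ {ω | r < R₂ ω})) ∪
        (⋃ j, ⋃ k ∈ Finset.univ.erase j,
          ({ω | m < c₁ j * X j ω} ∩ {ω | m < c₁ k * X k ω})) := by
      rintro ω ⟨h1, h2⟩
      by_cases hD : ∃ j k, j ≠ k ∧ m < c₁ j * X j ω ∧ m < c₁ k * X k ω
      · obtain ⟨j, k, hjk, hj, hk⟩ := hD
        refine Or.inr (Set.mem_iUnion.2 ⟨j, ?_⟩)
        exact Set.mem_biUnion (Finset.mem_erase.2 ⟨hjk.symm, Finset.mem_univ k⟩) ⟨hj, hk⟩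
      · by_cases hE : ∃ k, a < c₁ k * X k ω
        · obtain ⟨k, hk⟩ := hE
          exact Or.inl (Set.mem_iUnion.2 ⟨k, hk, h2⟩)
        · exfalso
          push_neg at hD hE
          have hR1le : R₁ ω ≤ r := by
            by_cases hj : ∃ j, m < c₁ j * X j ω
            · obtain ⟨j, hjm⟩ := hj
              have hother : ∀ k, k ≠ j → c₁ k * X k ω ≤ m := by
                intro k hkj
                by_contra hcon
                push_neg at hcon
                exact absurd hcon (not_lt.2 (hD j k (Ne.symm hkj) hjm))
              have hja : c₁ j * X j ω ≤ a := hE j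
              rw [hR₁ ω]
              calc ∑ k, c₁ k * X k ω
                  = c₁ j * X j ω + ∑ k ∈ Finset.univ.erase j, c₁ k * X k ω :=
                    (Finset.add_sum_erase _ _ (Finset.mem_univ j)).symm
                _ ≤ a + ∑ _k ∈ Finset.univ.erase j, m :=
                    add_le_add hja (Finset.sum_le_sum fun k hk =>
                      hother k (Finset.ne_of_mem_erase hk))
                _ ≤ a + ∑ _k : Fin K, m :=
                    add_le_add_right (Finset.sum_le_sum_of_subset_of_nonneg
                      (Finset.erase_subset _ _) (fun _ _ _ => hm0)) a
                _ = a + ε * r := by rw [hsumm]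
                _ = r := by rw [hadef]; ring
            · push_neg at hj
              rw [hR₁ ω]
              calc ∑ k, c₁ k * X k ω ≤ ∑ _k : Fin K, m :=
                    Finset.sum_le_sum fun k _ => hj k
                _ = ε * r := hsumm
                _ ≤ r := by nlinarith
          exact absurd h1 (not_lt.2 hR1le)
    -- pointwise inclusion 2
    have hincl2 : ∀ k : Fin K, {ω | a < c₁ k * X k ω} ∩ {ω | r < R₂ ω} ⊆
        ({ω | a < c₁ k * X k ω} ∩ {ω | a < c₂ k * X k ω}) ∪
        (⋃ j ∈ Finset.univ.erase k,
          ({ω | a < c₁ k * X k ω} ∩ {ω | m < c₂ j * X j ω})) := by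
      rintro k ω ⟨hk, hr2⟩
      by_cases h : a < c₂ k * X k ω
      · exact Or.inl ⟨hk, h⟩
      · push_neg at h
        by_cases h2 : ∃ j, j ≠ k ∧ m < c₂ j * X j ω
        · obtain ⟨j, hjk, hj⟩ := h2
          exact Or.inr (Set.mem_biUnion
            (Finset.mem_erase.2 ⟨hjk, Finset.mem_univ j⟩) ⟨hk, hj⟩)
        · exfalso
          push_neg at h2
          have hR2le : R₂ ω ≤ r := by
            rw [hR₂ ω]
            calc ∑ j, c₂ j * X j ω
                = c₂ k * X k ω + ∑ j ∈ Finset.univ.erase k, c₂ j * X j ω :=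
                  (Finset.add_sum_erase _ _ (Finset.mem_univ k)).symm
              _ ≤ a + ∑ _j ∈ Finset.univ.erase k, m :=
                  add_le_add h (Finset.sum_le_sum fun j hj =>
                    h2 j (Finset.ne_of_mem_erase hj))
              _ ≤ a + ∑ _k : Fin K, m :=
                  add_le_add_right (Finset.sum_le_sum_of_subset_of_nonneg
                    (Finset.erase_subset _ _) (fun _ _ _ => hm0)) a
              _ = r := by rw [hsumm, hadef]; ring
          exact absurd hr2 (not_lt.2 hR2le)
    -- pair independence computations
    have hpair12 : ∀ (k j : Fin K), k ≠ j →
        (P ({ω | a < c₁ k * X k ω} ∩ {ω | m < c₂ j * X j ω})).toReal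
          = (B₁ k * a ^ (-γ)) * (B₂ j * m ^ (-γ)) := by
      intro k j hkj
      have hind : P ({ω | a < c₁ k * X k ω} ∩ {ω | m < c₂ j * X j ω})
          = P {ω | a < c₁ k * X k ω} * P {ω | m < c₂ j * X j ω} :=
        (hindep.indepFun hkj).measure_inter_preimage_eq_mul
          {y : ℝ | a < c₁ k * y} {y : ℝ | m < c₂ j * y}
          (measurableSet_lt measurable_const (measurable_id.const_mul _))
          (measurableSet_lt measurable_const (measurable_id.const_mul _))
      rw [hind, ENNReal.toReal_mul,
        pareto_scaled_tail hγ (htail k) (hc₁0 k) (hc₁1 k) ha1,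
        pareto_scaled_tail hγ (htail j) (hc₂0 j) (hc₂1 j) hm1, hc₁γ, hc₂γ]
    have hpair11 : ∀ (j k : Fin K), j ≠ k →
        (P ({ω | m < c₁ j * X j ω} ∩ {ω | m < c₁ k * X k ω})).toReal
          = (B₁ j * m ^ (-γ)) * (B₁ k * m ^ (-γ)) := by
      intro j k hjk
      have hind : P ({ω | m < c₁ j * X j ω} ∩ {ω | m < c₁ k * X k ω})
          = P {ω | m < c₁ j * X j ω} * P {ω | m < c₁ k * X k ω} :=
        (hindep.indepFun hjk).measure_inter_preimage_eq_mul
          {y : ℝ | m < c₁ j * y} {y : ℝ | m < c₁ k * y}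
          (measurableSet_lt measurable_const (measurable_id.const_mul _))
          (measurableSet_lt measurable_const (measurable_id.const_mul _))
      rw [hind, ENNReal.toReal_mul,
        pareto_scaled_tail hγ (htail j) (hc₁0 j) (hc₁1 j) hm1,
        pareto_scaled_tail hγ (htail k) (hc₁0 k) (hc₁1 k) hm1, hc₁γ j, hc₁γ k]
    -- diagonal term
    have hdiag : ∀ k : Fin K,
        (P ({ω | a < c₁ k * X k ω} ∩ {ω | a < c₂ k * X k ω})).toReal
          ≤ min (B₁ k) (B₂ k) * ((1-ε) ^ (-γ) * r ^ (-γ)) := by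
      intro k
      have hsubk : ({ω | a < c₁ k * X k ω} ∩ {ω | a < c₂ k * X k ω}) ∩ G ⊆
          {ω | a < d k * X k ω} := by
        rintro ω ⟨⟨h1, h2⟩, hg⟩
        have hX1 : (1:ℝ) ≤ X k ω := hg k
        simp only [Set.mem_setOf_eq] at h1 h2 ⊢
        show a < min (c₁ k) (c₂ k) * X k ω
        rcases le_total (c₁ k) (c₂ k) with h | h
        · rwa [min_eq_left h]
        · rwa [min_eq_right h]
      calc (P ({ω | a < c₁ k * X k ω} ∩ {ω | a < c₂ k * X k ω})).toReal
          = (P (({ω | a < c₁ k * X k ω} ∩ {ω | a < c₂ k * X k ω}) ∩ G)).toReal := by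
            rw [measure_inter_conull hGc]
        _ ≤ (P {ω | a < d k * X k ω}).toReal := prob_toReal_mono hsubk
        _ = (d k) ^ γ * a ^ (-γ) :=
            pareto_scaled_tail hγ (htail k) (hd0 k) (hd1 k) ha1
        _ = min (B₁ k) (B₂ k) * ((1-ε) ^ (-γ) * r ^ (-γ)) := by rw [hdγ, haγ]
    -- per-k bound
    have hstep2 : ∀ k : Fin K,
        (P ({ω | a < c₁ k * X k ω} ∩ {ω | r < R₂ ω})).toReal
          ≤ min (B₁ k) (B₂ k) * ((1-ε) ^ (-γ) * r ^ (-γ))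
            + B₁ k * ((1-ε) ^ (-γ) * r ^ (-γ)) * (c0 * r ^ (-γ)) := by
      intro k
      have hsum2 : ∑ j ∈ Finset.univ.erase k,
          (P ({ω | a < c₁ k * X k ω} ∩ {ω | m < c₂ j * X j ω})).toReal
          ≤ B₁ k * ((1-ε) ^ (-γ) * r ^ (-γ)) * (c0 * r ^ (-γ)) := by
        have hnn : (0:ℝ) ≤ B₁ k * a ^ (-γ) * m ^ (-γ) :=
          mul_nonneg (mul_nonneg (hB₁ k) (Real.rpow_nonneg (by linarith) _))
            (Real.rpow_nonneg hm0 _)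
        calc ∑ j ∈ Finset.univ.erase k,
            (P ({ω | a < c₁ k * X k ω} ∩ {ω | m < c₂ j * X j ω})).toReal
            = ∑ j ∈ Finset.univ.erase k, (B₁ k * a ^ (-γ)) * (B₂ j * m ^ (-γ)) :=
              Finset.sum_congr rfl fun j hj =>
                hpair12 k j (Finset.ne_of_mem_erase hj).symm
          _ = (B₁ k * a ^ (-γ) * m ^ (-γ)) * ∑ j ∈ Finset.univ.erase k, B₂ j := by
              rw [Finset.mul_sum]
              exact Finset.sum_congr rfl fun j _ => by ring
          _ ≤ (B₁ k * a ^ (-γ) * m ^ (-γ)) * 1 := by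
              refine mul_le_mul_of_nonneg_left ?_ hnn
              rw [← hB₂sum]
              exact Finset.sum_le_sum_of_subset_of_nonneg
                (Finset.erase_subset _ _) fun j _ _ => hB₂ j
          _ = B₁ k * ((1-ε) ^ (-γ) * r ^ (-γ)) * (c0 * r ^ (-γ)) := by
              rw [haγ, hmγ]; ring
      calc (P ({ω | a < c₁ k * X k ω} ∩ {ω | r < R₂ ω})).toReal
          ≤ (P (({ω | a < c₁ k * X k ω} ∩ {ω | a < c₂ k * X k ω}) ∪
              (⋃ j ∈ Finset.univ.erase k,
                ({ω | a < c₁ k * X k ω} ∩ {ω | m < c₂ j * X j ω})))).toReal :=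
            prob_toReal_mono (hincl2 k)
        _ ≤ (P ({ω | a < c₁ k * X k ω} ∩ {ω | a < c₂ k * X k ω})).toReal
            + (P (⋃ j ∈ Finset.univ.erase k,
                ({ω | a < c₁ k * X k ω} ∩ {ω | m < c₂ j * X j ω}))).toReal :=
            prob_toReal_union_le _ _
        _ ≤ min (B₁ k) (B₂ k) * ((1-ε) ^ (-γ) * r ^ (-γ))
            + B₁ k * ((1-ε) ^ (-γ) * r ^ (-γ)) * (c0 * r ^ (-γ)) :=
            add_le_add (hdiag k) (le_trans (prob_toReal_biUnion_le _ _) hsum2)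
    -- the two-big-jumps term
    have hDbd : (P (⋃ j, ⋃ k ∈ Finset.univ.erase j,
        ({ω | m < c₁ j * X j ω} ∩ {ω | m < c₁ k * X k ω}))).toReal
        ≤ (c0 * r ^ (-γ)) * (c0 * r ^ (-γ)) := by
      have hinner : ∀ j : Fin K, ∑ k ∈ Finset.univ.erase j,
          (P ({ω | m < c₁ j * X j ω} ∩ {ω | m < c₁ k * X k ω})).toReal
          ≤ B₁ j * (m ^ (-γ) * m ^ (-γ)) := by
        intro j
        have hnn : (0:ℝ) ≤ B₁ j * m ^ (-γ) * m ^ (-γ) :=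
          mul_nonneg (mul_nonneg (hB₁ j) (Real.rpow_nonneg hm0 _))
            (Real.rpow_nonneg hm0 _)
        calc ∑ k ∈ Finset.univ.erase j,
            (P ({ω | m < c₁ j * X j ω} ∩ {ω | m < c₁ k * X k ω})).toReal
            = ∑ k ∈ Finset.univ.erase j, (B₁ j * m ^ (-γ)) * (B₁ k * m ^ (-γ)) :=
              Finset.sum_congr rfl fun k hk =>
                hpair11 j k (Finset.ne_of_mem_erase hk).symm
          _ = (B₁ j * m ^ (-γ) * m ^ (-γ)) * ∑ k ∈ Finset.univ.erase j, B₁ k := by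
              rw [Finset.mul_sum]
              exact Finset.sum_congr rfl fun k _ => by ring
          _ ≤ (B₁ j * m ^ (-γ) * m ^ (-γ)) * 1 := by
              refine mul_le_mul_of_nonneg_left ?_ hnn
              rw [← hB₁sum]
              exact Finset.sum_le_sum_of_subset_of_nonneg
                (Finset.erase_subset _ _) fun k _ _ => hB₁ k
          _ = B₁ j * (m ^ (-γ) * m ^ (-γ)) := by ring
      calc (P (⋃ j, ⋃ k ∈ Finset.univ.erase j,
          ({ω | m < c₁ j * X j ω} ∩ {ω | m < c₁ k * X k ω}))).toReal
          ≤ ∑ j, (P (⋃ k ∈ Finset.univ.erase j,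
              ({ω | m < c₁ j * X j ω} ∩ {ω | m < c₁ k * X k ω}))).toReal :=
            prob_toReal_iUnion_le _
        _ ≤ ∑ j, ∑ k ∈ Finset.univ.erase j,
              (P ({ω | m < c₁ j * X j ω} ∩ {ω | m < c₁ k * X k ω})).toReal :=
            Finset.sum_le_sum fun j _ => prob_toReal_biUnion_le _ _
        _ ≤ ∑ j, B₁ j * (m ^ (-γ) * m ^ (-γ)) :=
            Finset.sum_le_sum fun j _ => hinner j
        _ = (∑ j, B₁ j) * (m ^ (-γ) * m ^ (-γ)) := by rw [Finset.sum_mul]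
        _ = (c0 * r ^ (-γ)) * (c0 * r ^ (-γ)) := by rw [hB₁sum, hmγ]; ring
    -- assemble
    have e1 : ∑ k, min (B₁ k) (B₂ k) * ((1-ε) ^ (-γ) * r ^ (-γ))
        = (1-ε) ^ (-γ) * S * r ^ (-γ) := by
      rw [← Finset.sum_mul, hSdef]; ring
    have e2 : ∑ k, B₁ k * ((1-ε) ^ (-γ) * r ^ (-γ)) * (c0 * r ^ (-γ))
        = (1-ε) ^ (-γ) * c0 * (r ^ (-γ) * r ^ (-γ)) := by
      rw [← Finset.sum_mul, ← Finset.sum_mul, hB₁sum]; ring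
    calc (P {ω | r < R₁ ω ∧ r < R₂ ω}).toReal
        ≤ (P ((⋃ k, ({ω | a < c₁ k * X k ω} ∩ {ω | r < R₂ ω})) ∪
            (⋃ j, ⋃ k ∈ Finset.univ.erase j,
              ({ω | m < c₁ j * X j ω} ∩ {ω | m < c₁ k * X k ω})))).toReal :=
          prob_toReal_mono hincl1
      _ ≤ (P (⋃ k, ({ω | a < c₁ k * X k ω} ∩ {ω | r < R₂ ω}))).toReal
          + (P (⋃ j, ⋃ k ∈ Finset.univ.erase j,
              ({ω | m < c₁ j * X j ω} ∩ {ω | m < c₁ k * X k ω}))).toReal :=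
          prob_toReal_union_le _ _
      _ ≤ (∑ k, (P ({ω | a < c₁ k * X k ω} ∩ {ω | r < R₂ ω})).toReal)
          + (c0 * r ^ (-γ)) * (c0 * r ^ (-γ)) :=
          add_le_add (prob_toReal_iUnion_le _) hDbd
      _ ≤ (∑ k, (min (B₁ k) (B₂ k) * ((1-ε) ^ (-γ) * r ^ (-γ))
            + B₁ k * ((1-ε) ^ (-γ) * r ^ (-γ)) * (c0 * r ^ (-γ))))
          + (c0 * r ^ (-γ)) * (c0 * r ^ (-γ)) :=
          add_le_add_left (Finset.sum_le_sum fun k _ => hstep2 k) _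
      _ = (1-ε) ^ (-γ) * S * r ^ (-γ)
          + ((1-ε) ^ (-γ) * c0 + c0 * c0) * (r ^ (-γ) * r ^ (-γ)) := by
          rw [Finset.sum_add_distrib, e1, e2]; ring
  -- conclusion
  have hLBf : Tendsto (fun r : ℝ => r ^ γ * (1 - ∏ k, (1 - min (B₁ k) (B₂ k) * r ^ (-γ))))
      atTop (nhds S) := by
    have h := lower_limit (fun k => min (B₁ k) (B₂ k)) hγ
    rw [hSdef]
    simpa using h
  refine tendsto_order.2 ⟨?_, ?_⟩
  · intro b hb
    have hgt := (tendsto_order.1 hLBf).1 b hb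
    filter_upwards [hgt, eventually_ge_atTop (1:ℝ)] with r hgtr hr1
    have hrγ : (0:ℝ) ≤ r ^ γ := Real.rpow_nonneg (by linarith) _
    calc b < r ^ γ * (1 - ∏ k, (1 - min (B₁ k) (B₂ k) * r ^ (-γ))) := hgtr
      _ ≤ r ^ γ * (P {ω | r < R₁ ω ∧ r < R₂ ω}).toReal :=
        mul_le_mul_of_nonneg_left (hLB r hr1) hrγ
  · intro b hb
    have hcont1 : ContinuousAt (fun x : ℝ => x ^ (-γ)) 1 :=
      Real.continuousAt_rpow_const _ _ (Or.inl one_ne_zero)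
    have hcont : Tendsto (fun ε : ℝ => (1-ε) ^ (-γ) * S) (nhds 0) (nhds S) := by
      have h1 : Tendsto (fun ε : ℝ => 1 - ε) (nhds (0:ℝ)) (nhds 1) := by
        have := Tendsto.const_sub (1:ℝ) (tendsto_id (x := nhds (0:ℝ)))
        simpa using this
      have h2 := hcont1.tendsto.comp h1
      have h3 := h2.mul_const S
      simpa [Real.one_rpow] using h3
    have hev : ∀ᶠ ε in nhds (0:ℝ), (1-ε) ^ (-γ) * S < (S + b)/2 :=
      (tendsto_order.1 hcont).2 _ (by linarith)
    have hlt1 : ∀ᶠ ε in nhds (0:ℝ), ε < 1 := eventually_lt_nhds (by norm_num)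
    obtain ⟨ε, ⟨hεlt, hε1⟩, hε0⟩ :=
      (((hev.and hlt1).filter_mono nhdsWithin_le_nhds).and
        (self_mem_nhdsWithin (s := Set.Ioi (0:ℝ)))).exists
    obtain ⟨C, hC0, hCev⟩ := hUB ε hε0 hε1
    have htend0 : Tendsto (fun r : ℝ => C * r ^ (-γ)) atTop (nhds 0) := by
      simpa using (tendsto_rpow_neg_atTop hγ).const_mul C
    have hsmall : ∀ᶠ r in atTop, C * r ^ (-γ) < (b - S)/2 :=
      (tendsto_order.1 htend0).2 _ (by linarith)
    filter_upwards [hCev, hsmall, eventually_ge_atTop (1:ℝ)] with r hle hsm hr1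
    have hr0 : (0:ℝ) < r := by linarith
    have hrγpos : (0:ℝ) < r ^ γ := Real.rpow_pos_of_pos hr0 _
    have hid : r ^ γ * r ^ (-γ) = 1 := by
      rw [← Real.rpow_add hr0]; simp
    have key : r ^ γ * (P {ω | r < R₁ ω ∧ r < R₂ ω}).toReal
        ≤ (1-ε) ^ (-γ) * S + C * r ^ (-γ) := by
      calc r ^ γ * (P {ω | r < R₁ ω ∧ r < R₂ ω}).toReal
          ≤ r ^ γ * ((1-ε) ^ (-γ) * S * r ^ (-γ)
              + C * (r ^ (-γ) * r ^ (-γ))) :=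
            mul_le_mul_of_nonneg_left hle hrγpos.le
        _ = (1-ε) ^ (-γ) * S * (r ^ γ * r ^ (-γ))
            + C * (r ^ γ * r ^ (-γ)) * r ^ (-γ) := by ring
        _ = (1-ε) ^ (-γ) * S + C * r ^ (-γ) := by rw [hid]; ring
    calc r ^ γ * (P {ω | r < R₁ ω ∧ r < R₂ ω}).toReal
        ≤ (1-ε) ^ (-γ) * S + C * r ^ (-γ) := key
      _ < (S + b)/2 + (b - S)/2 := by linarith
      _ = b := by ring


/-- (Proposition 2.) If `X 1, …, X K` are independent Pareto(γ) random
variables (γ > 0) and the nonnegative weights `B₁ k` and `B₂ k` each sum to one, then for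
`R₁ = ∑ k, (B₁ k)^(1/γ) * X k` and `R₂ = ∑ k, (B₂ k)^(1/γ) * X k` the tail-correlation
coefficient satisfies `P(R₁ > r and R₂ > r) / P(R₂ > r) → ∑ k, min (B₁ k) (B₂ k)`. -/
theorem tail_correlation_lowrank_scale
    {Ω : Type*} [MeasurableSpace Ω] (P : Measure Ω) [IsProbabilityMeasure P]
    (K : ℕ) (γ : ℝ) (hγ : 0 < γ) (X : Fin K → Ω → ℝ)
    (hmeas : ∀ k, Measurable (X k))
    (hindep : iIndepFun X P)
    (htail : ∀ k, ∀ x : ℝ, 1 ≤ x → (P {ω | x < X k ω}).toReal = x ^ (-γ))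
    (hlow : ∀ k, ∀ x : ℝ, x < 1 → (P {ω | x < X k ω}).toReal = 1)
    (B₁ B₂ : Fin K → ℝ) (hB₁ : ∀ k, 0 ≤ B₁ k) (hB₂ : ∀ k, 0 ≤ B₂ k)
    (hB₁sum : ∑ k, B₁ k = 1) (hB₂sum : ∑ k, B₂ k = 1)
    (R₁ R₂ : Ω → ℝ)
    (hR₁ : ∀ ω, R₁ ω = ∑ k, (B₁ k) ^ (1 / γ) * X k ω)
    (hR₂ : ∀ ω, R₂ ω = ∑ k, (B₂ k) ^ (1 / γ) * X k ω) :
    Tendsto (fun r : ℝ =>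
        (P {ω | r < R₁ ω ∧ r < R₂ ω}).toReal / (P {ω | r < R₂ ω}).toReal)
      atTop (nhds (∑ k, min (B₁ k) (B₂ k))) := by
  have hnum := joint_tail P K γ hγ X hmeas hindep htail hlow B₁ B₂ hB₁ hB₂ hB₁sum hB₂sum
    R₁ R₂ hR₁ hR₂
  have hden' := joint_tail P K γ hγ X hmeas hindep htail hlow B₂ B₂ hB₂ hB₂ hB₂sum hB₂sum
    R₂ R₂ hR₂ hR₂
  have hden : Tendsto (fun r : ℝ => r ^ γ * (P {ω | r < R₂ ω}).toReal) atTop (nhds 1) := by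
    have hs : (∑ k, min (B₂ k) (B₂ k)) = 1 := by simpa using hB₂sum
    rw [← hs]
    refine hden'.congr fun r => ?_
    have he : {ω | r < R₂ ω ∧ r < R₂ ω} = {ω | r < R₂ ω} := by
      ext ω; simp
    rw [he]
  have hq := hnum.div hden one_ne_zero
  have heq : (fun r : ℝ => (r ^ γ * (P {ω | r < R₁ ω ∧ r < R₂ ω}).toReal) /
        (r ^ γ * (P {ω | r < R₂ ω}).toReal)) =ᶠ[atTop]
      (fun r : ℝ => (P {ω | r < R₁ ω ∧ r < R₂ ω}).toReal / (P {ω | r < R₂ ω}).toReal) := by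
    filter_upwards [eventually_gt_atTop (0:ℝ)] with r hr
    have hrγ : r ^ γ ≠ 0 := (Real.rpow_pos_of_pos hr _).ne'
    rw [mul_div_mul_left _ _ hrγ]
  exact Tendsto.congr' heq (by rw [div_one] at hq; exact hq)
end

section
/- Let R be a Pareto(γ) random variable with γ > 0, and let Z be a standard normal random variable independent of R. Then lim_{x→∞} x^γ · P(R·Z > x) = E[max(Z,0)^γ] = ∫_ℝ max(z,0)^γ φ(z) dz, where φ is the standard normal density. -/
open MeasureTheory ProbabilityTheory Filter

lemma aux_meas_maxrpow (γ : ℝ) (hγ : 0 ≤ γ) : Measurable (fun z : ℝ => max z 0 ^ γ) :=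
  ((continuous_id.max continuous_const).rpow_const fun _ => Or.inr hγ).measurable

lemma aux_integrable_vol (γ : ℝ) (hγ : 0 < γ) :
    Integrable (fun z : ℝ => max z 0 ^ γ * gaussianPDFReal 0 1 z) := by
  have hpdf : ∀ z : ℝ, gaussianPDFReal 0 1 z
      = (Real.sqrt (2 * Real.pi))⁻¹ * Real.exp (-(2 : ℝ)⁻¹ * z ^ 2) := by
    intro z
    simp only [gaussianPDFReal, NNReal.coe_one, mul_one, sub_zero]
    congr 1
    ring_nf
  have hint : Integrable (fun z : ℝ =>
      |(Real.sqrt (2 * Real.pi))⁻¹ * (z ^ γ * Real.exp (-(2 : ℝ)⁻¹ * z ^ 2))|) :=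
    (((integrable_rpow_mul_exp_neg_mul_sq (by norm_num : (0:ℝ) < 2⁻¹)
      (by linarith : (-1:ℝ) < γ)).const_mul _)).abs
  refine hint.mono' (((aux_meas_maxrpow γ hγ.le).mul
    (measurable_gaussianPDFReal 0 1)).aestronglyMeasurable) ?_
  refine Filter.Eventually.of_forall fun z => ?_
  rcases le_or_gt z 0 with hz | hz
  · rw [max_eq_right hz, Real.zero_rpow hγ.ne', zero_mul]
    simp only [norm_zero]
    exact abs_nonneg _
  · rw [max_eq_left hz.le, hpdf z, Real.norm_eq_abs,
      abs_of_nonneg (by positivity), abs_of_nonneg (by positivity)]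
    exact le_of_eq (by ring)

/-- (Breiman's lemma instance.) If `R` is Pareto(γ) with γ > 0 and `Z` is
standard normal, independent of `R`, then
`x^γ · P(R·Z > x) → E[max(Z,0)^γ] = ∫ max(z,0)^γ φ(z) dz` as `x → ∞`,
where `φ` is the standard normal density. -/
theorem breiman_pareto_gaussian_mixture
    {Ω : Type*} [MeasurableSpace Ω] (P : Measure Ω) [IsProbabilityMeasure P]
    (γ : ℝ) (hγ : 0 < γ) (R Z : Ω → ℝ)
    (hRmeas : Measurable R) (hZmeas : Measurable Z)
    (hRtail : ∀ x : ℝ, 1 ≤ x → (P {ω | x < R ω}).toReal = x ^ (-γ))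
    (hRlow : ∀ x : ℝ, x < 1 → (P {ω | x < R ω}).toReal = 1)
    (hZ : Measure.map Z P = gaussianReal 0 1)
    (hindep : IndepFun R Z P) :
    Tendsto (fun x : ℝ => x ^ γ * (P {ω | x < R ω * Z ω}).toReal)
        atTop (nhds (∫ ω, max (Z ω) 0 ^ γ ∂P)) ∧
      (∫ ω, max (Z ω) 0 ^ γ ∂P) = ∫ z : ℝ, max z 0 ^ γ * gaussianPDFReal 0 1 z := by
  classical
  have hZae : AEMeasurable Z P := hZmeas.aemeasurable
  have hRae : AEMeasurable R P := hRmeas.aemeasurable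
  have hm : Measurable (fun z : ℝ => max z 0 ^ γ) := aux_meas_maxrpow γ hγ.le
  -- change of variables
  have hPZ : (∫ ω, max (Z ω) 0 ^ γ ∂P) = ∫ z, max z 0 ^ γ ∂(gaussianReal 0 1) := by
    rw [← hZ, integral_map hZae hm.aestronglyMeasurable]
  -- second conjunct
  have hsecond : (∫ z, max z 0 ^ γ ∂(gaussianReal 0 1)) = ∫ z : ℝ, max z 0 ^ γ * gaussianPDFReal 0 1 z := by
    rw [gaussianReal_of_var_ne_zero 0 one_ne_zero]
    have hwd : volume.withDensity (gaussianPDF 0 1)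
        = volume.withDensity (fun x => ((gaussianPDFReal 0 1 x).toNNReal : ENNReal)) := rfl
    rw [hwd, integral_withDensity_eq_integral_smul
      ((measurable_gaussianPDFReal 0 1).real_toNNReal) _]
    refine integral_congr_ae (Filter.Eventually.of_forall fun z => ?_)
    show (gaussianPDFReal 0 1 z).toNNReal • (max z 0 ^ γ) = max z 0 ^ γ * gaussianPDFReal 0 1 z
    rw [NNReal.smul_def, smul_eq_mul, Real.coe_toNNReal _ (gaussianPDFReal_nonneg 0 1 z), mul_comm]
  -- integrability
  have hInt : Integrable (fun z : ℝ => max z 0 ^ γ) (gaussianReal 0 1) := by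
    rw [gaussianReal_of_var_ne_zero 0 one_ne_zero,
      integrable_withDensity_iff (measurable_gaussianPDF 0 1)
        (Filter.Eventually.of_forall fun z => ENNReal.ofReal_lt_top)]
    refine (aux_integrable_vol γ hγ).congr (Filter.Eventually.of_forall fun z => ?_)
    show max z 0 ^ γ * gaussianPDFReal 0 1 z = max z 0 ^ γ * (gaussianPDF 0 1 z).toReal
    rw [show gaussianPDF 0 1 z = ENNReal.ofReal (gaussianPDFReal 0 1 z) from rfl,
      ENNReal.toReal_ofReal (gaussianPDFReal_nonneg 0 1 z)]
  -- R is a.s. positive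
  have hRpos : P {ω | R ω ≤ 0} = 0 := by
    have h0 : (P {ω | (0:ℝ) < R ω}).toReal = 1 := hRlow 0 one_pos
    have h1 : P {ω | (0:ℝ) < R ω} = 1 := by
      rw [← ENNReal.ofReal_toReal (measure_ne_top P {ω | (0:ℝ) < R ω}), h0]
      simp
    have hc : {ω | R ω ≤ 0} = {ω | (0:ℝ) < R ω}ᶜ := by
      ext ω; simp [not_lt]
    have hms : MeasurableSet {ω | (0:ℝ) < R ω} := measurableSet_lt measurable_const hRmeas
    rw [hc, measure_compl hms (measure_ne_top _ _), measure_univ, h1, tsub_self]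
  -- joint law
  haveI : IsProbabilityMeasure (Measure.map R P) := Measure.isProbabilityMeasure_map hRae
  have hjoint : Measure.map (fun ω => (Z ω, R ω)) P = (gaussianReal 0 1).prod (Measure.map R P) := by
    rw [← hZ]
    exact (indepFun_iff_map_prod_eq_prod_map_map hZae hRae).mp hindep.symm
  -- the key identity
  have key : ∀ x : ℝ, 1 ≤ x →
      x ^ γ * (P {ω | x < R ω * Z ω}).toReal
        = ∫ z, min (x ^ γ) (max z 0 ^ γ) ∂(gaussianReal 0 1) := by
    intro x hx
    have hxpos : (0:ℝ) < x := lt_of_lt_of_le one_pos hx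
    have hxγ : (0:ℝ) < x ^ γ := Real.rpow_pos_of_pos hxpos γ
    have hS : MeasurableSet {p : ℝ × ℝ | x < p.2 * p.1} :=
      measurableSet_lt measurable_const (measurable_snd.mul measurable_fst)
    have hmap : P {ω | x < R ω * Z ω}
        = ∫⁻ z, (Measure.map R P) (Prod.mk z ⁻¹' {p : ℝ × ℝ | x < p.2 * p.1}) ∂(gaussianReal 0 1) := by
      have hset : {ω | x < R ω * Z ω}
          = (fun ω => (Z ω, R ω)) ⁻¹' {p : ℝ × ℝ | x < p.2 * p.1} := rfl
      rw [hset, ← Measure.map_apply (hZmeas.prodMk hRmeas) hS, hjoint, Measure.prod_apply hS]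
    have hslice_meas : Measurable fun z =>
        (Measure.map R P) (Prod.mk z ⁻¹' {p : ℝ × ℝ | x < p.2 * p.1}) :=
      measurable_measure_prodMk_left hS
    have hslice_lt : ∀ z : ℝ,
        (Measure.map R P) (Prod.mk z ⁻¹' {p : ℝ × ℝ | x < p.2 * p.1}) < ⊤ :=
      fun z => lt_of_le_of_lt prob_le_one ENNReal.one_lt_top
    have htoReal := integral_toReal (μ := gaussianReal 0 1) hslice_meas.aemeasurable
      (Filter.Eventually.of_forall hslice_lt)
    rw [hmap, ← htoReal, ← integral_const_mul]
    refine integral_congr_ae (Filter.Eventually.of_forall fun z => ?_)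
    have hsl : (Measure.map R P) (Prod.mk z ⁻¹' {p : ℝ × ℝ | x < p.2 * p.1})
        = P {ω | x < R ω * z} := by
      have h1 : Prod.mk z ⁻¹' {p : ℝ × ℝ | x < p.2 * p.1} = {r : ℝ | x < r * z} := rfl
      rw [h1, Measure.map_apply hRmeas
        (measurableSet_lt measurable_const (measurable_id'.mul_const z))]
      rfl
    show x ^ γ * ((Measure.map R P) (Prod.mk z ⁻¹' {p : ℝ × ℝ | x < p.2 * p.1})).toReal
      = min (x ^ γ) (max z 0 ^ γ)
    rw [hsl]
    rcases le_or_gt z 0 with hz | hz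
    · have h0 : P {ω | x < R ω * z} = 0 := by
        refine measure_mono_null (fun ω hω => ?_) hRpos
        simp only [Set.mem_setOf_eq] at hω ⊢
        by_contra h
        push_neg at h
        have h2 : R ω * z ≤ 0 := mul_nonpos_of_nonneg_of_nonpos h.le hz
        linarith
      rw [h0, max_eq_right hz, Real.zero_rpow hγ.ne', min_eq_right hxγ.le]
      simp
    · have hset2 : {ω | x < R ω * z} = {ω | x / z < R ω} := by
        ext ω
        exact (div_lt_iff₀ hz).symm
      rw [hset2, max_eq_left hz.le]
      rcases le_or_gt z x with hzx | hzx
      · have h1x : (1:ℝ) ≤ x / z := (one_le_div hz).mpr hzx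
        rw [hRtail _ h1x]
        have hdiv : (x / z) ^ (-γ) = z ^ γ / x ^ γ := by
          rw [Real.rpow_neg (by positivity), Real.div_rpow hxpos.le hz.le, inv_div]
        rw [hdiv, min_eq_right (Real.rpow_le_rpow hz.le hzx hγ.le), mul_comm,
          div_mul_cancel₀ _ hxγ.ne']
      · have h1x : x / z < 1 := (div_lt_one hz).mpr hzx
        rw [hRlow _ h1x, mul_one, min_eq_left (Real.rpow_le_rpow hxpos.le hzx.le hγ.le)]
  -- the limit
  refine ⟨?_, by rw [hPZ, hsecond]⟩
  rw [hPZ]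
  have T : Tendsto (fun x : ℝ => ∫ z, min (x ^ γ) (max z 0 ^ γ) ∂(gaussianReal 0 1)) atTop
      (nhds (∫ z, max z 0 ^ γ ∂(gaussianReal 0 1))) := by
    refine tendsto_integral_filter_of_dominated_convergence (fun z => max z 0 ^ γ)
      (Filter.Eventually.of_forall fun x =>
        (measurable_const.min hm).aestronglyMeasurable) ?_ hInt ?_
    · filter_upwards [eventually_ge_atTop (1:ℝ)] with x hx
      refine Filter.Eventually.of_forall fun z => ?_
      have h1 : (0:ℝ) ≤ x ^ γ := (Real.rpow_pos_of_pos (lt_of_lt_of_le one_pos hx) γ).le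
      have h2 : (0:ℝ) ≤ max z 0 ^ γ := Real.rpow_nonneg (le_max_right z 0) γ
      rw [Real.norm_eq_abs, abs_of_nonneg (le_min h1 h2)]
      exact min_le_right _ _
    · refine Filter.Eventually.of_forall fun z => ?_
      have h1 : ∀ᶠ x : ℝ in atTop, min (x ^ γ) (max z 0 ^ γ) = max z 0 ^ γ := by
        filter_upwards [(tendsto_rpow_atTop hγ).eventually_ge_atTop (max z 0 ^ γ)] with x hx
        exact min_eq_right hx
      exact tendsto_const_nhds.congr' (h1.mono fun x hx => hx.symm)
  refine T.congr' ?_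
  filter_upwards [eventually_ge_atTop (1:ℝ)] with x hx
  exact (key x hx).symm
end

section
/- Let β > 0, γ > 0, let R be a Weibull-type(β,γ) random variable, and let Z be a standard normal random variable independent of R. Then lim_{x→∞} log(−log P(R·Z > x)) / log x = 2β/(β + 2); that is, the product R·Z is Weibull-tailed with tail index 2β/(2 + β). -/
open MeasureTheory ProbabilityTheory Filter

lemma pdf_eq (x : ℝ) : gaussianPDFReal 0 1 x = (Real.sqrt (2*Real.pi))⁻¹ * Real.exp (-(x^2/2)) := by
  rw [gaussianPDFReal]
  norm_num
  left; ring

lemma sqrt_two_pi_ge_one : 1 ≤ Real.sqrt (2*Real.pi) := by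
  rw [show (1:ℝ) = Real.sqrt 1 by simp]
  exact Real.sqrt_le_sqrt (by nlinarith [Real.pi_gt_three])

lemma deriv_aux (x : ℝ) : HasDerivAt (fun y : ℝ => -Real.exp (-(y^2/2))) (x * Real.exp (-(x^2/2))) x := by
  have h1 : HasDerivAt (fun y : ℝ => -(y^2/2)) (-x) x := by
    have := ((hasDerivAt_pow 2 x).div_const 2).fun_neg
    exact this.congr_deriv (by simp)
  have := h1.exp.fun_neg
  exact this.congr_deriv (by ring)

lemma tendsto_aux : Tendsto (fun y : ℝ => -Real.exp (-(y^2/2))) atTop (nhds 0) := by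
  rw [show (0:ℝ) = -0 by simp]
  refine Tendsto.neg ?_
  refine Real.tendsto_exp_atBot.comp ?_
  have : Tendsto (fun y : ℝ => y^2/2) atTop atTop :=
    (tendsto_pow_atTop (by norm_num)).atTop_div_const (by norm_num)
  exact tendsto_neg_atBot_iff.mpr this

lemma integral_aux (t : ℝ) (ht : 0 ≤ t) :
    (∫ x in Set.Ioi t, x * Real.exp (-(x^2/2)) = Real.exp (-(t^2/2))) ∧
    IntegrableOn (fun x => x * Real.exp (-(x^2/2))) (Set.Ioi t) := by
  have hd : ∀ x ∈ Set.Ici t, HasDerivAt (fun y : ℝ => -Real.exp (-(y^2/2)))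
      (x * Real.exp (-(x^2/2))) x := fun x _ => deriv_aux x
  have hnn : ∀ x ∈ Set.Ioi t, 0 ≤ x * Real.exp (-(x^2/2)) := by
    intro x hx
    exact mul_nonneg (le_trans ht (le_of_lt hx)) (Real.exp_nonneg _)
  have hint := integrableOn_Ioi_deriv_of_nonneg' hd hnn tendsto_aux
  refine ⟨?_, hint⟩
  have := integral_Ioi_of_hasDerivAt_of_tendsto' hd hint tendsto_aux
  rw [this]; ring

lemma gaussUpper {t : ℝ} (ht : 1 ≤ t) :
    (gaussianReal 0 1 (Set.Ioi t)).toReal ≤ Real.exp (-(t^2/2)) := by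
  rw [gaussianReal_apply_eq_integral 0 one_ne_zero,
    ENNReal.toReal_ofReal (setIntegral_nonneg measurableSet_Ioi fun x _ => gaussianPDFReal_nonneg 0 1 x)]
  have ht0 : (0:ℝ) ≤ t := by linarith
  calc ∫ x in Set.Ioi t, gaussianPDFReal 0 1 x
      ≤ ∫ x in Set.Ioi t, x * Real.exp (-(x^2/2)) := by
        refine setIntegral_mono_on ((integrable_gaussianPDFReal 0 1).integrableOn)
          (integral_aux t ht0).2 measurableSet_Ioi ?_
        intro x hx
        rw [pdf_eq]
        have hx1 : 1 ≤ x := le_trans ht (le_of_lt hx)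
        have hinv : (Real.sqrt (2*Real.pi))⁻¹ ≤ 1 := inv_le_one_of_one_le₀ sqrt_two_pi_ge_one
        nlinarith [Real.exp_pos (-(x^2/2)), Real.exp_le_exp.mpr (le_refl (-(x^2/2)))]
    _ = Real.exp (-(t^2/2)) := (integral_aux t ht0).1

lemma gaussLower {t : ℝ} (ht : 0 ≤ t) :
    Real.exp (-((t+1)^2/2)) / Real.sqrt (2*Real.pi) ≤ (gaussianReal 0 1 (Set.Ioi t)).toReal := by
  have h1 : (gaussianReal 0 1 (Set.Ioc t (t+1))).toReal ≤ (gaussianReal 0 1 (Set.Ioi t)).toReal :=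
    ENNReal.toReal_mono (measure_ne_top _ _) (measure_mono Set.Ioc_subset_Ioi_self)
  refine le_trans ?_ h1
  rw [gaussianReal_apply_eq_integral 0 one_ne_zero,
    ENNReal.toReal_ofReal (setIntegral_nonneg measurableSet_Ioc fun x _ => gaussianPDFReal_nonneg 0 1 x)]
  have key := setIntegral_ge_of_const_le_real (s := Set.Ioc t (t+1)) (c := gaussianPDFReal 0 1 (t+1)) measurableSet_Ioc
    (by rw [Real.volume_Ioc]; exact ENNReal.ofReal_ne_top) ?_
    ((integrable_gaussianPDFReal 0 1).integrableOn)
  · have hv : (volume (Set.Ioc t (t+1))).toReal = 1 := by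
      rw [Real.volume_Ioc]; simp
    rw [measureReal_def, hv, mul_one] at key
    refine le_trans (le_of_eq ?_) key
    rw [pdf_eq, div_eq_inv_mul]
  · intro x hx
    rw [pdf_eq, pdf_eq]
    have h2 : x^2 ≤ (t+1)^2 := by nlinarith [hx.1, hx.2]
    have h3 := Real.exp_le_exp.mpr (show -((t+1)^2/2) ≤ -(x^2/2) by linarith)
    have hinv : (0:ℝ) ≤ (Real.sqrt (2*Real.pi))⁻¹ := by positivity
    exact mul_le_mul_of_nonneg_left h3 hinv

/-- If `R` is Weibull-type(β,γ) with β > 0, γ > 0, and `Z` is standard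
normal and independent of `R`, then `log(-log P(R·Z > x)) / log x → 2β/(β+2)` as `x → ∞`;
that is, `R·Z` is Weibull-tailed with tail index `2β/(2+β)`. -/
theorem weibull_gaussian_mixture_tail_index
    {Ω : Type*} [MeasurableSpace Ω] (P : Measure Ω) [IsProbabilityMeasure P]
    (β γ : ℝ) (hβ : 0 < β) (hγ : 0 < γ) (R Z : Ω → ℝ)
    (hRmeas : Measurable R) (hZmeas : Measurable Z)
    (hRtail : ∀ x : ℝ, 1 ≤ x → (P {ω | x < R ω}).toReal = Real.exp (-γ * (x ^ β - 1) / β))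
    (hRlow : ∀ x : ℝ, x < 1 → (P {ω | x < R ω}).toReal = 1)
    (hZ : Measure.map Z P = gaussianReal 0 1)
    (hindep : IndepFun R Z P) :
    Tendsto (fun x : ℝ =>
        Real.log (-Real.log ((P {ω | x < R ω * Z ω}).toReal)) / Real.log x)
      atTop (nhds (2 * β / (β + 2))) := by
  have hβ2 : (0:ℝ) < β + 2 := by linarith
  set α : ℝ := 2 * β / (β + 2) with hαdef
  have hα : 0 < α := div_pos (by linarith) hβ2
  set a : ℝ := 2 / (β + 2) with hadef
  set b : ℝ := β / (β + 2) with hbdef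
  have ha : 0 < a := div_pos (by norm_num) hβ2
  have hb : 0 < b := div_pos hβ hβ2
  have hab : a + b = 1 := by rw [hadef, hbdef]; field_simp; ring
  have haβ : a * β = α := by rw [hadef, hαdef]; ring
  have hb2 : b + b = α := by rw [hbdef, hαdef]; ring
  set L : ℝ := Real.log (Real.sqrt (2 * Real.pi)) with hLdef
  have hL : 0 ≤ L := Real.log_nonneg sqrt_two_pi_ge_one
  set C : ℝ := γ / β + 2 + L with hCdef
  have hC : 0 < C := by positivity
  set c : ℝ := min (γ / β) (1 / 2) with hcdef
  have hc : 0 < c := lt_min (div_pos hγ hβ) one_half_pos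
  set K : ℝ := Real.exp (γ / β) + 1 with hKdef
  have hK : 1 < K := by
    have := Real.exp_pos (γ / β); rw [hKdef]; linarith
  set f : ℝ → ℝ := fun x => (P {ω | x < R ω * Z ω}).toReal with hfdef
  -- gaussian identity
  have hgauss : ∀ t : ℝ, P {ω | t < Z ω} = gaussianReal 0 1 (Set.Ioi t) := by
    intro t
    rw [← hZ, Measure.map_apply hZmeas measurableSet_Ioi]
    rfl
  have hpreR : ∀ t : ℝ, R ⁻¹' (Set.Ioi t) = {ω | t < R ω} := by
    intro t; ext ω; simp
  have hpreZ : ∀ t : ℝ, Z ⁻¹' (Set.Ioi t) = {ω | t < Z ω} := by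
    intro t; ext ω; simp
  -- P(R ≤ 0) = 0
  have hRpos : P {ω | R ω ≤ 0} = 0 := by
    have h0 := hRlow 0 (by norm_num)
    have hne : P {ω | (0:ℝ) < R ω} ≠ ⊤ := measure_ne_top _ _
    have h1 : P {ω | (0:ℝ) < R ω} = 1 := by
      rw [← ENNReal.ofReal_toReal hne, h0]; simp
    have hm : MeasurableSet {ω | (0:ℝ) < R ω} := measurableSet_lt measurable_const hRmeas
    have h2 := measure_compl (μ := P) hm (measure_ne_top P _)
    rw [h1, measure_univ] at h2
    simp only [tsub_self] at h2
    have h3 : {ω | (0:ℝ) < R ω}ᶜ = {ω | R ω ≤ 0} := by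
      ext ω; simp [not_lt]
    rw [← h3]
    exact h2
  -- basic facts for fixed x ≥ 1
  -- Lower bound
  have hlow : ∀ x : ℝ, 1 ≤ x → Real.exp (-C * x ^ α) ≤ f x := by
    intro x hx
    have hx0 : (0:ℝ) < x := by linarith
    have hr1 : (1:ℝ) ≤ x ^ a := by
      calc (1:ℝ) = (1:ℝ) ^ a := (Real.one_rpow a).symm
        _ ≤ x ^ a := Real.rpow_le_rpow zero_le_one hx ha.le
    have hs1 : (1:ℝ) ≤ x ^ b := by
      calc (1:ℝ) = (1:ℝ) ^ b := (Real.one_rpow b).symm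
        _ ≤ x ^ b := Real.rpow_le_rpow zero_le_one hx hb.le
    have hX1 : (1:ℝ) ≤ x ^ α := by
      calc (1:ℝ) = (1:ℝ) ^ α := (Real.one_rpow α).symm
        _ ≤ x ^ α := Real.rpow_le_rpow zero_le_one hx hα.le
    have hrs : x ^ a * x ^ b = x := by
      rw [← Real.rpow_add hx0, hab, Real.rpow_one]
    have hXa : (x ^ a) ^ β = x ^ α := by
      rw [← Real.rpow_mul hx0.le, haβ]
    have hXb : x ^ b * x ^ b = x ^ α := by
      rw [← Real.rpow_add hx0, hb2]
    have hsub : {ω | x ^ a < R ω} ∩ {ω | x ^ b < Z ω} ⊆ {ω | x < R ω * Z ω} := by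
      rintro ω ⟨h1, h2⟩
      simp only [Set.mem_setOf_eq] at *
      have h3 : x ^ a * x ^ b < R ω * Z ω :=
        mul_lt_mul'' h1 h2 (by positivity) (by positivity)
      rwa [hrs] at h3
    have hmul : P ({ω | x ^ a < R ω} ∩ {ω | x ^ b < Z ω})
        = P {ω | x ^ a < R ω} * P {ω | x ^ b < Z ω} := by
      have h := hindep.measure_inter_preimage_eq_mul (Set.Ioi (x ^ a)) (Set.Ioi (x ^ b))
        measurableSet_Ioi measurableSet_Ioi
      rwa [hpreR, hpreZ] at h
    have hmono := measure_mono (μ := P) hsub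
    rw [hmul] at hmono
    have h1 : (P {ω | x ^ a < R ω}).toReal * (P {ω | x ^ b < Z ω}).toReal ≤ f x := by
      rw [← ENNReal.toReal_mul]
      exact ENNReal.toReal_mono (measure_ne_top _ _) hmono
    have hR : (P {ω | x ^ a < R ω}).toReal = Real.exp (-γ * (x ^ α - 1) / β) := by
      rw [hRtail (x ^ a) hr1, hXa]
    have hZl : Real.exp (-((x ^ b + 1)^2/2)) / Real.sqrt (2*Real.pi)
        ≤ (P {ω | x ^ b < Z ω}).toReal := by
      rw [hgauss]
      exact gaussLower (by positivity)
    have h2 : Real.exp (-γ * (x ^ α - 1) / β) *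
        (Real.exp (-((x ^ b + 1)^2/2)) / Real.sqrt (2*Real.pi)) ≤ f x := by
      rw [← hR]
      exact le_trans (mul_le_mul_of_nonneg_left hZl ENNReal.toReal_nonneg) h1
    refine le_trans ?_ h2
    rw [← Real.exp_log (show (0:ℝ) < Real.sqrt (2*Real.pi) by positivity), ← Real.exp_sub,
      ← Real.exp_add, ← hLdef]
    apply Real.exp_le_exp.mpr
    have hg : -γ * (x ^ α - 1) / β = -(γ/β) * (x ^ α - 1) := by field_simp
    rw [hg, hCdef]
    nlinarith [mul_nonneg hL (by linarith : (0:ℝ) ≤ x ^ α - 1), sq_nonneg (x ^ b - 1),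
      div_pos hγ hβ, hs1, hX1, hXb]
  -- Upper bound
  have hup : ∀ x : ℝ, 1 ≤ x → f x ≤ K * Real.exp (-c * x ^ α) := by
    intro x hx
    have hx0 : (0:ℝ) < x := by linarith
    have hr1 : (1:ℝ) ≤ x ^ a := by
      calc (1:ℝ) = (1:ℝ) ^ a := (Real.one_rpow a).symm
        _ ≤ x ^ a := Real.rpow_le_rpow zero_le_one hx ha.le
    have hs1 : (1:ℝ) ≤ x ^ b := by
      calc (1:ℝ) = (1:ℝ) ^ b := (Real.one_rpow b).symm
        _ ≤ x ^ b := Real.rpow_le_rpow zero_le_one hx hb.le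
    have hrs : x ^ a * x ^ b = x := by
      rw [← Real.rpow_add hx0, hab, Real.rpow_one]
    have hXa : (x ^ a) ^ β = x ^ α := by
      rw [← Real.rpow_mul hx0.le, haβ]
    have hXb : x ^ b * x ^ b = x ^ α := by
      rw [← Real.rpow_add hx0, hb2]
    have hsub : {ω | x < R ω * Z ω} ⊆
        {ω | R ω ≤ 0} ∪ ({ω | x ^ a < R ω} ∪ {ω | x ^ b < Z ω}) := by
      intro ω hω
      simp only [Set.mem_setOf_eq, Set.mem_union] at *
      by_contra hcon
      push_neg at hcon
      obtain ⟨h0, h1, h2⟩ := hcon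
      have : R ω * Z ω ≤ x := by
        calc R ω * Z ω ≤ R ω * x ^ b := mul_le_mul_of_nonneg_left h2 (le_of_lt h0)
          _ ≤ x ^ a * x ^ b := mul_le_mul_of_nonneg_right h1 (by positivity)
          _ = x := hrs
      linarith
    have hm1 : P {ω | x < R ω * Z ω} ≤ P {ω | x ^ a < R ω} + P {ω | x ^ b < Z ω} := by
      calc P {ω | x < R ω * Z ω}
          ≤ P ({ω | R ω ≤ 0} ∪ ({ω | x ^ a < R ω} ∪ {ω | x ^ b < Z ω})) := measure_mono hsub
        _ ≤ P {ω | R ω ≤ 0} + P ({ω | x ^ a < R ω} ∪ {ω | x ^ b < Z ω}) := measure_union_le _ _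
        _ = P ({ω | x ^ a < R ω} ∪ {ω | x ^ b < Z ω}) := by rw [hRpos, zero_add]
        _ ≤ _ := measure_union_le _ _
    have h1 : f x ≤ (P {ω | x ^ a < R ω}).toReal + (P {ω | x ^ b < Z ω}).toReal := by
      rw [← ENNReal.toReal_add (measure_ne_top _ _) (measure_ne_top _ _)]
      exact ENNReal.toReal_mono (ENNReal.add_ne_top.mpr ⟨measure_ne_top _ _, measure_ne_top _ _⟩) hm1
    have hR : (P {ω | x ^ a < R ω}).toReal = Real.exp (-γ * (x ^ α - 1) / β) := by
      rw [hRtail (x ^ a) hr1, hXa]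
    have hZu : (P {ω | x ^ b < Z ω}).toReal ≤ Real.exp (-(x ^ α / 2)) := by
      rw [hgauss]
      have h := gaussUpper hs1
      have h2 : ((x:ℝ) ^ b) ^ 2 = x ^ α := by rw [pow_two]; exact hXb
      rwa [h2] at h
    refine h1.trans ?_
    rw [hR]
    have e1 : Real.exp (-γ * (x ^ α - 1) / β) ≤ Real.exp (γ/β) * Real.exp (-c * x ^ α) := by
      rw [← Real.exp_add]
      apply Real.exp_le_exp.mpr
      have hg : -γ * (x ^ α - 1) / β = -(γ/β) * x ^ α + γ/β := by field_simp; ring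
      rw [hg]
      have hcx : c * x ^ α ≤ (γ/β) * x ^ α :=
        mul_le_mul_of_nonneg_right (min_le_left _ _) (by positivity)
      linarith
    have e2 : Real.exp (-(x ^ α / 2)) ≤ Real.exp (-c * x ^ α) := by
      apply Real.exp_le_exp.mpr
      have hcx : c * x ^ α ≤ (1/2) * x ^ α :=
        mul_le_mul_of_nonneg_right (min_le_right _ _) (by positivity)
      linarith
    have hKe : K * Real.exp (-c * x ^ α)
        = Real.exp (γ/β) * Real.exp (-c * x ^ α) + Real.exp (-c * x ^ α) := by
      rw [hKdef]; ring
    rw [hKe]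
    exact add_le_add e1 (hZu.trans e2)
  -- limit computations
  have hXtend : Tendsto (fun x : ℝ => x ^ α) atTop atTop := tendsto_rpow_atTop hα
  have hlim1 : Tendsto (fun x : ℝ => Real.log (c/2) / Real.log x + α) atTop (nhds α) := by
    have h0 : Tendsto (fun x : ℝ => Real.log (c/2) / Real.log x) atTop (nhds 0) :=
      Tendsto.div_atTop tendsto_const_nhds Real.tendsto_log_atTop
    simpa using h0.add (tendsto_const_nhds (x := α))
  have hlim2 : Tendsto (fun x : ℝ => Real.log C / Real.log x + α) atTop (nhds α) := by
    have h0 : Tendsto (fun x : ℝ => Real.log C / Real.log x) atTop (nhds 0) :=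
      Tendsto.div_atTop tendsto_const_nhds Real.tendsto_log_atTop
    simpa using h0.add (tendsto_const_nhds (x := α))
  refine tendsto_of_tendsto_of_tendsto_of_le_of_le' hlim1 hlim2 ?_ ?_
  · filter_upwards [eventually_gt_atTop 1,
      hXtend.eventually_ge_atTop (2 * (Real.log K + 1) / c)] with x hx1 hxK
    have hx0 : (0:ℝ) < x := by linarith
    have hX1 : (1:ℝ) ≤ x ^ α := by
      calc (1:ℝ) = (1:ℝ) ^ α := (Real.one_rpow α).symm
        _ ≤ x ^ α := Real.rpow_le_rpow zero_le_one hx1.le hα.le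
    have hlogx : 0 < Real.log x := Real.log_pos hx1
    have hl := hlow x hx1.le
    have hu := hup x hx1.le
    have fpos : 0 < f x := lt_of_lt_of_le (Real.exp_pos _) hl
    have hlogf : Real.log (f x) ≤ Real.log K + (-c * x ^ α) := by
      calc Real.log (f x) ≤ Real.log (K * Real.exp (-c * x ^ α)) := Real.log_le_log fpos hu
        _ = Real.log K + (-c * x ^ α) := by
            rw [Real.log_mul (by linarith) (Real.exp_ne_zero _), Real.log_exp]
    have hKc : Real.log K ≤ c * x ^ α / 2 := by
      have h := (div_le_iff₀ hc).mp hxK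
      rw [mul_comm] at h
      linarith
    have hneg : (c/2) * x ^ α ≤ -Real.log (f x) := by
      have hh : (c/2) * x ^ α = (c * x ^ α)/2 := by ring
      linarith
    have hpos2 : (0:ℝ) < (c/2) * x ^ α := mul_pos (by linarith) (by positivity)
    have hstep : Real.log ((c/2) * x ^ α) ≤ Real.log (-Real.log (f x)) :=
      Real.log_le_log hpos2 hneg
    rw [Real.log_mul (by positivity) (by positivity), Real.log_rpow hx0] at hstep
    have heq : Real.log (c/2) / Real.log x + α
        = (Real.log (c/2) + α * Real.log x) / Real.log x := by
      field_simp
    rw [heq]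
    exact (div_le_div_iff_of_pos_right hlogx).mpr hstep
  · filter_upwards [eventually_gt_atTop 1,
      hXtend.eventually_ge_atTop (2 * (Real.log K + 1) / c)] with x hx1 hxK
    have hx0 : (0:ℝ) < x := by linarith
    have hX1 : (1:ℝ) ≤ x ^ α := by
      calc (1:ℝ) = (1:ℝ) ^ α := (Real.one_rpow α).symm
        _ ≤ x ^ α := Real.rpow_le_rpow zero_le_one hx1.le hα.le
    have hlogx : 0 < Real.log x := Real.log_pos hx1
    have hl := hlow x hx1.le
    have hu := hup x hx1.le
    have fpos : 0 < f x := lt_of_lt_of_le (Real.exp_pos _) hl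
    have hlogf : Real.log (f x) ≤ Real.log K + (-c * x ^ α) := by
      calc Real.log (f x) ≤ Real.log (K * Real.exp (-c * x ^ α)) := Real.log_le_log fpos hu
        _ = Real.log K + (-c * x ^ α) := by
            rw [Real.log_mul (by linarith) (Real.exp_ne_zero _), Real.log_exp]
    have hKc : Real.log K ≤ c * x ^ α / 2 := by
      have h := (div_le_iff₀ hc).mp hxK
      rw [mul_comm] at h
      linarith
    have hneg : (c/2) * x ^ α ≤ -Real.log (f x) := by
      have hh : (c/2) * x ^ α = (c * x ^ α)/2 := by ring
      linarith
    have hnpos : 0 < -Real.log (f x) := lt_of_lt_of_le (mul_pos (by linarith : (0:ℝ) < c/2) (by positivity)) hneg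
    have hlogf2 : -Real.log (f x) ≤ C * x ^ α := by
      have : Real.log (Real.exp (-C * x ^ α)) ≤ Real.log (f x) :=
        Real.log_le_log (Real.exp_pos _) hl
      rw [Real.log_exp] at this
      linarith
    have hstep : Real.log (-Real.log (f x)) ≤ Real.log (C * x ^ α) :=
      Real.log_le_log hnpos hlogf2
    rw [Real.log_mul (ne_of_gt hC) (by positivity), Real.log_rpow hx0] at hstep
    have heq : Real.log C / Real.log x + α
        = (Real.log C + α * Real.log x) / Real.log x := by
      field_simp
    rw [heq]
    exact (div_le_div_iff_of_pos_right hlogx).mpr hstep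
end
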